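/- arXiv:1605.09124 — 4 statements merged into one kernel-verified Lean document; each statement's English description precedes it below -/
import Mathlib

section
/- There exists a universal constant c > 0 such that for every odd integer S ≥ 3, every real u ≥ 2, and all integers m ≥ 5 and n ≥ 16·u, under the Poisson sampling model every estimator D̂ satisfies sup_{(P,Q)∈U_{S,u}} E[(D̂ − D(P‖Q))²] ≥ c·((ln u)²/m + u/n); that is, the Poisson-model minimax risk over U_{S,u} is at least c·((ln u)²/m + u/n). -/
open scoped BigOperators ENNReal

noncomputable section

/-- `P` is a probability vector on `Fin S`. -/
def IsProbVec {S : ℕ} (P : Fin S → ℝ) : Prop :=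
  (∀ i, 0 ≤ P i) ∧ ∑ i, P i = 1

/-- `(P, Q)` lies in `U_{S,u}`: both probability vectors, with likelihood ratio `≤ u`. -/
def MemU {S : ℕ} (u : ℝ) (P Q : Fin S → ℝ) : Prop :=
  IsProbVec P ∧ IsProbVec Q ∧ ∀ i, P i ≤ u * Q i

/-- KL divergence `∑ᵢ pᵢ ln (pᵢ/qᵢ)` (with `0 ln (0/q) = 0`; valid whenever `P ≪ Q`,
which holds on `U_{S,u}`). -/
def klDiv {S : ℕ} (P Q : Fin S → ℝ) : ℝ :=
  ∑ i, P i * Real.log (P i / Q i)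

/-- Probability mass function of the Poisson distribution with rate `r`. -/
def poissonPMF (r : ℝ) (k : ℕ) : ℝ :=
  Real.exp (-r) * r ^ k / (Nat.factorial k : ℝ)

/-- Mean squared error of the estimator `est` of the target value `T` under the Poisson
sampling model: the observation consists of mutually independent counts
`Xᵢ ~ Poi(lam · pᵢ)` and `Yᵢ ~ Poi(mu · qᵢ)`. -/
def poissonRisk (S : ℕ) (lam mu : ℝ) (P Q : Fin S → ℝ) (T : ℝ)
    (est : (Fin S → ℕ) → (Fin S → ℕ) → ℝ) : ℝ≥0∞ :=
  ∑' xy : (Fin S → ℕ) × (Fin S → ℕ),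
    ENNReal.ofReal ((∏ i, poissonPMF (lam * P i) (xy.1 i)) *
      (∏ i, poissonPMF (mu * Q i) (xy.2 i)) *
      (est xy.1 xy.2 - T) ^ 2)


lemma poissonPMF_nonneg {r : ℝ} (hr : 0 ≤ r) (k : ℕ) : 0 ≤ poissonPMF r k := by
  unfold poissonPMF; positivity

lemma hasSum_poissonPMF {r : ℝ} (hr : 0 ≤ r) : HasSum (poissonPMF r) 1 := by
  have h := ProbabilityTheory.poissonPMFRealSum r.toNNReal
  have : (fun n => ProbabilityTheory.poissonPMFReal r.toNNReal n) = poissonPMF r := by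
    funext n
    simp [ProbabilityTheory.poissonPMFReal, poissonPMF, Real.coe_toNNReal r hr]
  convert h using 1
  exact this.symm

lemma tsum_ofReal_poissonPMF {r : ℝ} (hr : 0 ≤ r) :
    ∑' k, ENNReal.ofReal (poissonPMF r k) = 1 := by
  rw [← ENNReal.ofReal_tsum_of_nonneg (fun k => poissonPMF_nonneg hr k)
    (hasSum_poissonPMF hr).summable, (hasSum_poissonPMF hr).tsum_eq, ENNReal.ofReal_one]

lemma pi_tsum_prod : ∀ (S : ℕ) (g : Fin S → ℕ → ℝ≥0∞),
    ∑' x : Fin S → ℕ, ∏ i, g i (x i) = ∏ i, ∑' k, g i k := by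
  intro S
  induction S with
  | zero =>
    intro g
    simp only [Finset.univ_eq_empty, Finset.prod_empty]
    rw [tsum_eq_sum (s := {(fun i => 0 : Fin 0 → ℕ)})]
    · simp
    · intro b hb; exact absurd (by funext i; exact absurd i.2 (by omega) : b = fun i => 0) (by simpa using hb)
  | succ n ih =>
    intro g
    rw [← (Fin.consEquiv (fun _ => ℕ)).tsum_eq]
    have h1 : ∀ p : ℕ × (Fin n → ℕ), ∏ i, g i ((Fin.consEquiv (fun _ => ℕ)) p i)
        = g 0 p.1 * ∏ i : Fin n, g i.succ (p.2 i) := by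
      intro p
      rw [Fin.prod_univ_succ]
      simp [Fin.consEquiv]
    simp_rw [h1]
    have h2 : (∑' c : ℕ × (Fin n → ℕ), g 0 c.1 * ∏ i : Fin n, g i.succ (c.2 i))
        = ∑' (a : ℕ), ∑' (b : Fin n → ℕ), g 0 a * ∏ i : Fin n, g i.succ (b i) :=
      ENNReal.tsum_prod (f := fun (a : ℕ) (b : Fin n → ℕ) => g 0 a * ∏ i : Fin n, g i.succ (b i))
    rw [h2]
    simp_rw [ENNReal.tsum_mul_left]
    rw [ih (fun i => g i.succ), Fin.prod_univ_succ, ENNReal.tsum_mul_right]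

lemma sqrt_poissonPMF_mul {a b : ℝ} (ha : 0 ≤ a) (hb : 0 ≤ b) (k : ℕ) :
    Real.sqrt (poissonPMF a k * poissonPMF b k)
      = Real.exp (-((Real.sqrt a - Real.sqrt b)^2/2)) * poissonPMF (Real.sqrt (a*b)) k := by
  have hfac : (0:ℝ) < (Nat.factorial k : ℝ) := by positivity
  have hsab : Real.sqrt a * Real.sqrt b = Real.sqrt (a*b) := (Real.sqrt_mul ha b).symm
  have hsq : (Real.sqrt a - Real.sqrt b)^2 = a + b - 2*Real.sqrt (a*b) := by
    have h1 := Real.sq_sqrt ha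
    have h2 := Real.sq_sqrt hb
    nlinarith [hsab]
  have hA : Real.exp (-((Real.sqrt a - Real.sqrt b)^2/2)) * Real.exp (-(Real.sqrt (a*b)))
      = Real.exp (-((a+b)/2)) := by
    rw [← Real.exp_add]; congr 1; rw [hsq]; ring
  have e1 : (Real.sqrt (a*b) ^ k)^2 = a^k * b^k := by
    rw [← pow_mul, mul_comm k 2, pow_mul, Real.sq_sqrt (by positivity), mul_pow]
  have e2 : Real.exp (-((a+b)/2)) * Real.exp (-((a+b)/2)) = Real.exp (-a) * Real.exp (-b) := by
    rw [← Real.exp_add, ← Real.exp_add]; congr 1; ring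
  have key : (Real.exp (-((Real.sqrt a - Real.sqrt b)^2/2)) * poissonPMF (Real.sqrt (a*b)) k)^2
      = poissonPMF a k * poissonPMF b k := by
    unfold poissonPMF
    have expand : (Real.exp (-((Real.sqrt a - Real.sqrt b)^2/2)) *
        (Real.exp (-(Real.sqrt (a*b))) * Real.sqrt (a*b) ^ k / (Nat.factorial k : ℝ)))^2
        = ((Real.exp (-((Real.sqrt a - Real.sqrt b)^2/2)) * Real.exp (-(Real.sqrt (a*b)))) *
           (Real.exp (-((Real.sqrt a - Real.sqrt b)^2/2)) * Real.exp (-(Real.sqrt (a*b))))) *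
          ((Real.sqrt (a*b) ^ k)^2) / (Nat.factorial k : ℝ)^2 := by ring
    rw [expand, hA, e2, e1]
    ring
  have hnn : 0 ≤ Real.exp (-((Real.sqrt a - Real.sqrt b)^2/2)) * poissonPMF (Real.sqrt (a*b)) k := by
    unfold poissonPMF; positivity
  rw [← key, Real.sqrt_sq hnn]

def prodPMF {S : ℕ} (r : Fin S → ℝ) (x : Fin S → ℕ) : ℝ := ∏ i, poissonPMF (r i) (x i)

lemma prodPMF_nonneg {S : ℕ} {r : Fin S → ℝ} (hr : ∀ i, 0 ≤ r i) (x : Fin S → ℕ) :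
    0 ≤ prodPMF r x :=
  Finset.prod_nonneg fun i _ => poissonPMF_nonneg (hr i) _

lemma tsum_ofReal_prodPMF {S : ℕ} {r : Fin S → ℝ} (hr : ∀ i, 0 ≤ r i) :
    ∑' x : Fin S → ℕ, ENNReal.ofReal (prodPMF r x) = 1 := by
  have : ∀ x : Fin S → ℕ, ENNReal.ofReal (prodPMF r x)
      = ∏ i, ENNReal.ofReal (poissonPMF (r i) (x i)) := fun x =>
    ENNReal.ofReal_prod_of_nonneg (fun i _ => poissonPMF_nonneg (hr i) _)
  simp_rw [this]
  rw [pi_tsum_prod S (fun i k => ENNReal.ofReal (poissonPMF (r i) k))]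
  simp_rw [fun i => tsum_ofReal_poissonPMF (hr i)]
  simp

lemma sqrt_prod {ι : Type*} (s : Finset ι) (f : ι → ℝ) (hf : ∀ i ∈ s, 0 ≤ f i) :
    Real.sqrt (∏ i ∈ s, f i) = ∏ i ∈ s, Real.sqrt (f i) := by
  have h1 : (∏ i ∈ s, Real.sqrt (f i))^2 = ∏ i ∈ s, f i := by
    rw [← Finset.prod_pow]
    exact Finset.prod_congr rfl fun i hi => Real.sq_sqrt (hf i hi)
  rw [← h1, Real.sqrt_sq (Finset.prod_nonneg fun i _ => Real.sqrt_nonneg _)]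

lemma tsum_ofReal_sqrt_prodPMF {S : ℕ} {r r' : Fin S → ℝ}
    (hr : ∀ i, 0 ≤ r i) (hr' : ∀ i, 0 ≤ r' i) :
    ∑' x : Fin S → ℕ, ENNReal.ofReal (Real.sqrt (prodPMF r x * prodPMF r' x))
      = ENNReal.ofReal (Real.exp (-(∑ i, (Real.sqrt (r i) - Real.sqrt (r' i))^2/2))) := by
  have step : ∀ x : Fin S → ℕ, Real.sqrt (prodPMF r x * prodPMF r' x)
      = Real.exp (-(∑ i, (Real.sqrt (r i) - Real.sqrt (r' i))^2/2)) *
        prodPMF (fun i => Real.sqrt (r i * r' i)) x := by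
    intro x
    unfold prodPMF
    rw [← Finset.prod_mul_distrib, sqrt_prod _ _
      (fun i _ => mul_nonneg (poissonPMF_nonneg (hr i) _) (poissonPMF_nonneg (hr' i) _))]
    have : ∀ i : Fin S, Real.sqrt (poissonPMF (r i) (x i) * poissonPMF (r' i) (x i))
        = Real.exp (-((Real.sqrt (r i) - Real.sqrt (r' i))^2/2)) *
          poissonPMF (Real.sqrt (r i * r' i)) (x i) := fun i =>
      sqrt_poissonPMF_mul (hr i) (hr' i) (x i)
    simp_rw [this]
    rw [Finset.prod_mul_distrib, ← Real.exp_sum]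
    congr 2
    rw [← Finset.sum_neg_distrib]
  simp_rw [step]
  have hexp : 0 ≤ Real.exp (-(∑ i, (Real.sqrt (r i) - Real.sqrt (r' i))^2/2)) :=
    (Real.exp_pos _).le
  simp_rw [ENNReal.ofReal_mul hexp]
  rw [ENNReal.tsum_mul_left, tsum_ofReal_prodPMF (fun i => Real.sqrt_nonneg _), mul_one]

lemma sqrt_mul_sqrt_le (x y : ℝ) (hx : 0 ≤ x) (hy : 0 ≤ y) :
    Real.sqrt x * Real.sqrt y ≤ (x + y)/2 := by
  nlinarith [Real.sq_sqrt hx, Real.sq_sqrt hy, Real.sqrt_nonneg x, Real.sqrt_nonneg y,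
    sq_nonneg (Real.sqrt x - Real.sqrt y)]

lemma risk_two_point {ι : Type*} (f₁ f₂ : ι → ℝ) (h₁ : ∀ z, 0 ≤ f₁ z) (h₂ : ∀ z, 0 ≤ f₂ z)
    (hs₁ : ∑' z, ENNReal.ofReal (f₁ z) = 1) (hs₂ : ∑' z, ENNReal.ofReal (f₂ z) = 1)
    (T₁ T₂ : ℝ) (d : ι → ℝ) (δ C : ℝ) (hδ0 : 0 ≤ δ) (hC0 : 0 ≤ C)
    (hδ : δ ≤ |T₁ - T₂|)
    (hA : ENNReal.ofReal C ≤ ∑' z, ENNReal.ofReal (Real.sqrt (f₁ z * f₂ z))) :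
    ENNReal.ofReal (C^2 * δ^2 / 4) ≤
      (∑' z, ENNReal.ofReal (f₁ z * (d z - T₁)^2)) +
      (∑' z, ENNReal.ofReal (f₂ z * (d z - T₂)^2)) := by
  classical
  set mn : ι → ℝ := fun z => min (f₁ z) (f₂ z) with hmn
  set mx : ι → ℝ := fun z => max (f₁ z) (f₂ z) with hmx
  have hmn0 : ∀ z, 0 ≤ mn z := fun z => le_min (h₁ z) (h₂ z)
  have hmx0 : ∀ z, 0 ≤ mx z := fun z => le_trans (h₁ z) (le_max_left _ _)
  set M : ℝ≥0∞ := ∑' z, ENNReal.ofReal (mn z) with hM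
  set X : ℝ≥0∞ := ∑' z, ENNReal.ofReal (mx z) with hX
  set A : ℝ≥0∞ := ∑' z, ENNReal.ofReal (Real.sqrt (f₁ z * f₂ z)) with hA'
  -- X ≤ 2
  have hX2 : X ≤ 2 := by
    have : ∀ z, ENNReal.ofReal (mx z) ≤ ENNReal.ofReal (f₁ z) + ENNReal.ofReal (f₂ z) := by
      intro z
      rcases max_cases (f₁ z) (f₂ z) with ⟨h, _⟩ | ⟨h, _⟩ <;> rw [hmx] <;> simp only [h] <;>
        [exact le_add_of_le_of_nonneg le_rfl zero_le;
         exact le_add_of_nonneg_of_le zero_le le_rfl]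
    calc X ≤ ∑' z, (ENNReal.ofReal (f₁ z) + ENNReal.ofReal (f₂ z)) := ENNReal.tsum_le_tsum this
      _ = 1 + 1 := by rw [ENNReal.tsum_add, hs₁, hs₂]
      _ = 2 := by norm_num
  -- Cauchy-Schwarz: A * A ≤ M * X
  have hCS : A * A ≤ M * X := by
    have expand : A * A = ∑' z, ∑' w,
        ENNReal.ofReal (Real.sqrt (f₁ z * f₂ z)) * ENNReal.ofReal (Real.sqrt (f₁ w * f₂ w)) := by
      rw [hA', ← ENNReal.tsum_mul_right]
      exact tsum_congr fun z => (ENNReal.tsum_mul_left).symm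
    have pointwise : ∀ z w,
        ENNReal.ofReal (Real.sqrt (f₁ z * f₂ z)) * ENNReal.ofReal (Real.sqrt (f₁ w * f₂ w)) ≤
        (ENNReal.ofReal (mn z * mx w) + ENNReal.ofReal (mn w * mx z)) / 2 := by
      intro z w
      rw [← ENNReal.ofReal_mul (Real.sqrt_nonneg _)]
      have hr : Real.sqrt (f₁ z * f₂ z) * Real.sqrt (f₁ w * f₂ w) ≤
          ((mn z * mx w) + (mn w * mx z))/2 := by
        have e1 : f₁ z * f₂ z = mn z * mx z := (min_mul_max _ _).symm
        have e2 : f₁ w * f₂ w = mn w * mx w := (min_mul_max _ _).symm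
        rw [e1, e2, ← Real.sqrt_mul (mul_nonneg (hmn0 z) (hmx0 z))]
        have e3 : mn z * mx z * (mn w * mx w) = (mn z * mx w) * (mn w * mx z) := by ring
        rw [e3, Real.sqrt_mul (mul_nonneg (hmn0 z) (hmx0 w))]
        exact sqrt_mul_sqrt_le _ _ (mul_nonneg (hmn0 z) (hmx0 w)) (mul_nonneg (hmn0 w) (hmx0 z))
      calc ENNReal.ofReal (Real.sqrt (f₁ z * f₂ z) * Real.sqrt (f₁ w * f₂ w))
          ≤ ENNReal.ofReal (((mn z * mx w) + (mn w * mx z))/2) := ENNReal.ofReal_le_ofReal hr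
        _ = (ENNReal.ofReal (mn z * mx w) + ENNReal.ofReal (mn w * mx z)) / 2 := by
            rw [ENNReal.ofReal_div_of_pos two_pos,
              ENNReal.ofReal_add (mul_nonneg (hmn0 z) (hmx0 w)) (mul_nonneg (hmn0 w) (hmx0 z))]
            norm_num
    have sum_rhs : (∑' z, ∑' w,
        (ENNReal.ofReal (mn z * mx w) + ENNReal.ofReal (mn w * mx z)) / 2) = M * X := by
      have inner : ∀ z, (∑' w,
          (ENNReal.ofReal (mn z * mx w) + ENNReal.ofReal (mn w * mx z)) / 2)
          = (ENNReal.ofReal (mn z) * X + ENNReal.ofReal (mx z) * M) / 2 := by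
        intro z
        simp_rw [div_eq_mul_inv, ENNReal.tsum_mul_right]
        congr 1
        rw [ENNReal.tsum_add]
        congr 1
        · simp_rw [fun w => ENNReal.ofReal_mul (hmn0 z)]
          exact ENNReal.tsum_mul_left
        · have : ∀ w, ENNReal.ofReal (mn w * mx z) = ENNReal.ofReal (mx z) * ENNReal.ofReal (mn w) := by
            intro w
            rw [← ENNReal.ofReal_mul (hmx0 z), mul_comm]
          simp_rw [this]
          exact ENNReal.tsum_mul_left
      simp_rw [inner, div_eq_mul_inv, ENNReal.tsum_mul_right, ENNReal.tsum_add,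
        ENNReal.tsum_mul_right]
      rw [← hM, ← hX]
      rw [mul_comm X M]
      have h2 : (M * X + M * X) = M * X * 2 := by ring
      rw [h2, mul_assoc, ENNReal.mul_inv_cancel (by norm_num) (by norm_num), mul_one]
    calc A * A = _ := expand
      _ ≤ ∑' z, ∑' w, (ENNReal.ofReal (mn z * mx w) + ENNReal.ofReal (mn w * mx z)) / 2 :=
          ENNReal.tsum_le_tsum fun z => ENNReal.tsum_le_tsum fun w => pointwise z w
      _ = M * X := sum_rhs
  have hAM : ENNReal.ofReal (C^2) ≤ 2 * M := by
    calc ENNReal.ofReal (C^2) = ENNReal.ofReal C * ENNReal.ofReal C := by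
          rw [← ENNReal.ofReal_mul hC0]; ring_nf
      _ ≤ A * A := mul_le_mul' hA hA
      _ ≤ M * X := hCS
      _ ≤ M * 2 := mul_le_mul' le_rfl hX2
      _ = 2 * M := mul_comm _ _
  -- risk lower bound
  have hrisk : ENNReal.ofReal (δ^2/2) * M ≤
      (∑' z, ENNReal.ofReal (f₁ z * (d z - T₁)^2)) +
      (∑' z, ENNReal.ofReal (f₂ z * (d z - T₂)^2)) := by
    rw [← ENNReal.tsum_add]
    have pw : ∀ z, ENNReal.ofReal (δ^2/2) * ENNReal.ofReal (mn z) ≤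
        ENNReal.ofReal (f₁ z * (d z - T₁)^2) + ENNReal.ofReal (f₂ z * (d z - T₂)^2) := by
      intro z
      rw [← ENNReal.ofReal_mul (by positivity)]
      have key : δ^2/2 * mn z ≤ mn z * (d z - T₁)^2 + mn z * (d z - T₂)^2 := by
        have h1 : δ^2 ≤ (T₁ - T₂)^2 := by
          have := abs_nonneg (T₁ - T₂)
          nlinarith [sq_abs (T₁ - T₂)]
        nlinarith [hmn0 z, sq_nonneg (2*(d z) - T₁ - T₂), sq_nonneg (d z - T₁), sq_nonneg (d z - T₂)]
      calc ENNReal.ofReal (δ^2/2 * mn z)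
          ≤ ENNReal.ofReal (mn z * (d z - T₁)^2 + mn z * (d z - T₂)^2) :=
            ENNReal.ofReal_le_ofReal key
        _ ≤ ENNReal.ofReal (f₁ z * (d z - T₁)^2) + ENNReal.ofReal (f₂ z * (d z - T₂)^2) := by
            rw [ENNReal.ofReal_add (mul_nonneg (hmn0 z) (sq_nonneg _)) (mul_nonneg (hmn0 z) (sq_nonneg _))]
            exact add_le_add
              (ENNReal.ofReal_le_ofReal (mul_le_mul_of_nonneg_right (min_le_left _ _) (sq_nonneg _)))
              (ENNReal.ofReal_le_ofReal (mul_le_mul_of_nonneg_right (min_le_right _ _) (sq_nonneg _)))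
    calc ENNReal.ofReal (δ^2/2) * M = ∑' z, ENNReal.ofReal (δ^2/2) * ENNReal.ofReal (mn z) :=
          ENNReal.tsum_mul_left.symm
      _ ≤ _ := ENNReal.tsum_le_tsum pw
  -- combine
  have final : 2 * ENNReal.ofReal (C^2 * δ^2 / 4) ≤ 2 * ((∑' z, ENNReal.ofReal (f₁ z * (d z - T₁)^2)) +
      (∑' z, ENNReal.ofReal (f₂ z * (d z - T₂)^2))) := by
    calc 2 * ENNReal.ofReal (C^2 * δ^2 / 4) = ENNReal.ofReal (δ^2/2) * ENNReal.ofReal (C^2) := by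
          rw [← ENNReal.ofReal_mul (by positivity)]
          rw [show δ^2/2 * C^2 = 2 * (C^2 * δ^2/4) by ring]
          rw [ENNReal.ofReal_mul (by norm_num)]
          norm_num
      _ ≤ ENNReal.ofReal (δ^2/2) * (2 * M) := mul_le_mul' le_rfl hAM
      _ = 2 * (ENNReal.ofReal (δ^2/2) * M) := by ring
      _ ≤ _ := mul_le_mul' le_rfl hrisk
  exact (ENNReal.mul_le_mul_iff_right (by norm_num) (by norm_num)).mp final

def vec2 (S : ℕ) (a b : ℝ) : Fin S → ℝ := fun i =>
  if (i:ℕ) = 0 then a else if (i:ℕ) = 1 then b else 0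

lemma sum_vec2 {S : ℕ} (hS : 2 ≤ S) (a b : ℝ) : ∑ i, vec2 S a b i = a + b := by
  classical
  set i0 : Fin S := ⟨0, by omega⟩
  set i1 : Fin S := ⟨1, by omega⟩
  have : ∀ i : Fin S, vec2 S a b i = (if i = i0 then a else 0) + (if i = i1 then b else 0) := by
    intro i
    unfold vec2
    have h0 : ((i:ℕ) = 0) ↔ i = i0 := by simp [i0, Fin.ext_iff]
    have h1 : ((i:ℕ) = 1) ↔ i = i1 := by simp [i1, Fin.ext_iff]
    split_ifs with hA hB <;>
      simp_all [h0, h1] <;> omega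
  simp_rw [this]
  rw [Finset.sum_add_distrib, Finset.sum_ite_eq' Finset.univ i0 (fun _ => a),
    Finset.sum_ite_eq' Finset.univ i1 (fun _ => b)]
  simp

lemma vec2_comb {S : ℕ} (g : ℝ → ℝ → ℝ) (h0 : g 0 0 = 0) (a b c d : ℝ) :
    (fun i => g (vec2 S a b i) (vec2 S c d i)) = vec2 S (g a c) (g b d) := by
  funext i
  unfold vec2
  split_ifs <;> simp [h0]

lemma entropy_phi_deriv {t : ℝ} (h0 : 0 < t) (h1 : t < 1) :
    HasDerivAt (fun s => -((1-s) * Real.log (1-s)) - s * Real.log s - s * Real.log 2)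
      (Real.log (1-t) - Real.log t - Real.log 2) t := by
  have h1t : (1:ℝ) - t ≠ 0 := by linarith
  have d1 : HasDerivAt (fun s : ℝ => (1-s) * Real.log (1-s)) ((Real.log (1-t) + 1) * (-1)) t := by
    have inner : HasDerivAt (fun s : ℝ => 1 - s) (-1) t := by
      simpa using (hasDerivAt_id' t).const_sub (1:ℝ)
    exact (Real.hasDerivAt_mul_log h1t).comp t inner
  have d2 : HasDerivAt (fun s : ℝ => s * Real.log s) (Real.log t + 1) t :=
    Real.hasDerivAt_mul_log (ne_of_gt h0)
  have d3 : HasDerivAt (fun s : ℝ => s * Real.log 2) (Real.log 2) t := by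
    simpa using (hasDerivAt_id t).mul_const (Real.log 2)
  have := (d1.neg.sub d2).sub d3
  exact this.congr_deriv (by ring)

lemma entropy_step {x y : ℝ} (hx : 1/4 ≤ x) (hxy : x ≤ y) (hy : y ≤ 1/3) :
    (y - x) * Real.log 2 ≤
      (-((1-y) * Real.log (1-y)) - y * Real.log y) -
      (-((1-x) * Real.log (1-x)) - x * Real.log x) := by
  set φ : ℝ → ℝ := fun s => -((1-s) * Real.log (1-s)) - s * Real.log s - s * Real.log 2 with hφ
  have hmem : ∀ t ∈ Set.Icc (1/4 : ℝ) (1/3), 0 < t ∧ t < 1 := by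
    intro t ht; exact ⟨by linarith [ht.1], by linarith [ht.2]⟩
  have hD : ∀ t ∈ Set.Icc (1/4 : ℝ) (1/3),
      HasDerivAt φ (Real.log (1-t) - Real.log t - Real.log 2) t := by
    intro t ht
    exact entropy_phi_deriv (hmem t ht).1 (hmem t ht).2
  have hmono : MonotoneOn φ (Set.Icc (1/4 : ℝ) (1/3)) := by
    apply monotoneOn_of_deriv_nonneg (convex_Icc _ _)
    · intro t ht
      exact (hD t ht).continuousAt.continuousWithinAt
    · intro t ht
      exact ((hD t (interior_subset ht)).differentiableAt).differentiableWithinAt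
    · intro t ht
      rw [interior_Icc] at ht
      rw [(hD t ⟨le_of_lt ht.1, le_of_lt ht.2⟩).deriv]
      have h0 : (0:ℝ) < t := by linarith [ht.1]
      have key : Real.log (2*t) ≤ Real.log (1-t) :=
        Real.log_le_log (by linarith) (by linarith [ht.2])
      rw [Real.log_mul (by norm_num) (ne_of_gt h0)] at key
      linarith
  have := hmono ⟨hx, le_trans hxy hy⟩ ⟨le_trans hx hxy, hy⟩ hxy
  rw [hφ] at this
  simp only at this
  linarith

lemma sqrt_diff_sq_le {a b : ℝ} (ha : 0 < a) (hab : a ≤ b) :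
    (Real.sqrt a - Real.sqrt b)^2 ≤ (b - a)^2/(4*a) := by
  rw [le_div_iff₀ (by positivity)]
  have hs := Real.sq_sqrt ha.le
  have ht := Real.sq_sqrt (le_trans ha.le hab)
  have hmono : Real.sqrt a ≤ Real.sqrt b := Real.sqrt_le_sqrt hab
  have hpos : 0 < Real.sqrt a := Real.sqrt_pos.mpr ha
  have key : 0 ≤ (Real.sqrt b - Real.sqrt a)^3 * (Real.sqrt b + 3*Real.sqrt a) :=
    mul_nonneg (pow_nonneg (sub_nonneg.2 hmono) 3) (by positivity)
  nlinarith [key]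

lemma exp_half_lt : Real.exp (1/2 : ℝ) < 5/3 := by
  have h := Real.exp_one_lt_d9
  have h2 : Real.exp (1/2 : ℝ) * Real.exp (1/2 : ℝ) = Real.exp 1 := by
    rw [← Real.exp_add]; norm_num
  nlinarith [Real.exp_pos (1/2 : ℝ)]

lemma exp_neg_bound {s : ℝ} (hs : s ≤ 1/2) : (3/5 : ℝ) ≤ Real.exp (-s) := by
  have h1 : Real.exp (-(1/2 : ℝ)) ≤ Real.exp (-s) := Real.exp_le_exp.mpr (by linarith)
  have h2 : (3/5 : ℝ) ≤ Real.exp (-(1/2 : ℝ)) := by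
    rw [Real.exp_neg]
    rw [le_inv_comm₀ (by norm_num) (Real.exp_pos _)]
    linarith [exp_half_lt]
  linarith

lemma log_one_add_ge {x : ℝ} (hx0 : 0 ≤ x) (hx1 : x ≤ 1) : x/2 ≤ Real.log (1 + x) := by
  have hpos : (0:ℝ) < 1 + x := by linarith
  have h := Real.log_le_sub_one_of_pos (show (0:ℝ) < (1+x)⁻¹ by positivity)
  rw [Real.log_inv] at h
  have hinv : (1+x)⁻¹ - 1 = -(x/(1+x)) := by field_simp; ring
  rw [hinv] at h
  have h2 : x/(1+x) ≤ Real.log (1+x) := by linarith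
  have h3 : x/2 ≤ x/(1+x) := by
    rw [div_le_div_iff₀ (by norm_num) hpos]
    nlinarith
  linarith

lemma log_twice_sub_one {u : ℝ} (hu : 2 ≤ u) :
    Real.log u / 2 ≤ Real.log 2 + Real.log (u - 1) := by
  have h1 : Real.log 2 + Real.log (u-1) = Real.log (2*(u-1)) :=
    (Real.log_mul (by norm_num) (by linarith)).symm
  have h2 : Real.log u / 2 = Real.log (Real.sqrt u) := (Real.log_sqrt (by linarith)).symm
  rw [h1, h2]
  apply Real.log_le_log (Real.sqrt_pos.mpr (by linarith))
  have h3 : Real.sqrt u ≤ u := by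
    have h4 : Real.sqrt u ≤ Real.sqrt (u^2) := Real.sqrt_le_sqrt (by nlinarith)
    rwa [Real.sqrt_sq (by linarith : (0:ℝ) ≤ u)] at h4
  linarith

lemma sqrt_ge_two {m : ℝ} (hm : 4 ≤ m) : 2 ≤ Real.sqrt m := by
  have : Real.sqrt 4 ≤ Real.sqrt m := Real.sqrt_le_sqrt hm
  have h4 : Real.sqrt 4 = 2 := by
    rw [show (4:ℝ) = 2^2 by norm_num, Real.sqrt_sq (by norm_num)]
  linarith

lemma tsum_ofReal_joint {S : ℕ} {rx ry : Fin S → ℝ}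
    (hx : ∀ i, 0 ≤ rx i) (hy : ∀ i, 0 ≤ ry i) :
    ∑' z : (Fin S → ℕ) × (Fin S → ℕ),
      ENNReal.ofReal (prodPMF rx z.1 * prodPMF ry z.2) = 1 := by
  have e : ∀ z : (Fin S → ℕ) × (Fin S → ℕ),
      ENNReal.ofReal (prodPMF rx z.1 * prodPMF ry z.2)
        = ENNReal.ofReal (prodPMF rx z.1) * ENNReal.ofReal (prodPMF ry z.2) :=
    fun z => ENNReal.ofReal_mul (prodPMF_nonneg hx z.1)
  simp_rw [e]
  have h2 : (∑' z : (Fin S → ℕ) × (Fin S → ℕ),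
      ENNReal.ofReal (prodPMF rx z.1) * ENNReal.ofReal (prodPMF ry z.2))
      = ∑' (a : Fin S → ℕ), ∑' (b : Fin S → ℕ),
        ENNReal.ofReal (prodPMF rx a) * ENNReal.ofReal (prodPMF ry b) :=
    ENNReal.tsum_prod (f := fun (a b : Fin S → ℕ) =>
      ENNReal.ofReal (prodPMF rx a) * ENNReal.ofReal (prodPMF ry b))
  rw [h2]
  simp_rw [ENNReal.tsum_mul_left]
  rw [tsum_ofReal_prodPMF hy]
  simp_rw [mul_one]
  exact tsum_ofReal_prodPMF hx

lemma tsum_ofReal_sqrt_joint {S : ℕ} {r1x r1y r2x r2y : Fin S → ℝ}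
    (h1x : ∀ i, 0 ≤ r1x i) (h1y : ∀ i, 0 ≤ r1y i)
    (h2x : ∀ i, 0 ≤ r2x i) (h2y : ∀ i, 0 ≤ r2y i) :
    ∑' z : (Fin S → ℕ) × (Fin S → ℕ),
      ENNReal.ofReal (Real.sqrt ((prodPMF r1x z.1 * prodPMF r1y z.2) *
        (prodPMF r2x z.1 * prodPMF r2y z.2)))
      = ENNReal.ofReal (Real.exp (-(∑ i, (Real.sqrt (r1x i) - Real.sqrt (r2x i))^2/2)
          + -(∑ i, (Real.sqrt (r1y i) - Real.sqrt (r2y i))^2/2))) := by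
  have e : ∀ z : (Fin S → ℕ) × (Fin S → ℕ),
      ENNReal.ofReal (Real.sqrt ((prodPMF r1x z.1 * prodPMF r1y z.2) *
        (prodPMF r2x z.1 * prodPMF r2y z.2)))
      = ENNReal.ofReal (Real.sqrt (prodPMF r1x z.1 * prodPMF r2x z.1)) *
        ENNReal.ofReal (Real.sqrt (prodPMF r1y z.2 * prodPMF r2y z.2)) := by
    intro z
    rw [← ENNReal.ofReal_mul (Real.sqrt_nonneg _), ← Real.sqrt_mul
      (mul_nonneg (prodPMF_nonneg h1x z.1) (prodPMF_nonneg h2x z.1))]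
    congr 2
    ring
  simp_rw [e]
  have h2 : (∑' z : (Fin S → ℕ) × (Fin S → ℕ),
      ENNReal.ofReal (Real.sqrt (prodPMF r1x z.1 * prodPMF r2x z.1)) *
        ENNReal.ofReal (Real.sqrt (prodPMF r1y z.2 * prodPMF r2y z.2)))
      = ∑' (a : Fin S → ℕ), ∑' (b : Fin S → ℕ),
        ENNReal.ofReal (Real.sqrt (prodPMF r1x a * prodPMF r2x a)) *
        ENNReal.ofReal (Real.sqrt (prodPMF r1y b * prodPMF r2y b)) :=
    ENNReal.tsum_prod (f := fun (a b : Fin S → ℕ) =>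
      ENNReal.ofReal (Real.sqrt (prodPMF r1x a * prodPMF r2x a)) *
      ENNReal.ofReal (Real.sqrt (prodPMF r1y b * prodPMF r2y b)))
  rw [h2]
  simp_rw [ENNReal.tsum_mul_left]
  rw [tsum_ofReal_sqrt_prodPMF h1y h2y]
  simp_rw [ENNReal.tsum_mul_right]
  rw [tsum_ofReal_sqrt_prodPMF h1x h2x, ← ENNReal.ofReal_mul (Real.exp_pos _).le,
    ← Real.exp_add]

lemma klDiv_vec2 {S : ℕ} (hS : 2 ≤ S) (a b c d : ℝ) :
    klDiv (vec2 S a b) (vec2 S c d)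
      = a * Real.log (a/c) + b * Real.log (b/d) := by
  unfold klDiv
  have e : (fun i => vec2 S a b i * Real.log (vec2 S a b i / vec2 S c d i))
      = vec2 S (a * Real.log (a/c)) (b * Real.log (b/d)) := by
    exact vec2_comb (fun x y => x * Real.log (x/y)) (by simp) _ _ _ _
  calc ∑ i, vec2 S a b i * Real.log (vec2 S a b i / vec2 S c d i)
      = ∑ i, vec2 S (a * Real.log (a/c)) (b * Real.log (b/d)) i := by rw [← e]
    _ = _ := sum_vec2 hS _ _

lemma klt_formula {S : ℕ} (hS : 2 ≤ S) {t u : ℝ} (ht0 : 0 < t) (ht1 : t < 1) (hu : 2 ≤ u) :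
    klDiv (vec2 S (1-t) t) (vec2 S (1/u) (1-1/u))
      = ((1-t) * Real.log (1-t) + t * Real.log t) + Real.log u - t * Real.log (u-1) := by
  have hu0 : (0:ℝ) < u := by linarith
  rw [klDiv_vec2 hS]
  have e1 : Real.log ((1-t)/(1/u)) = Real.log (1-t) + Real.log u := by
    rw [Real.log_div (by linarith) (by positivity), one_div, Real.log_inv]
    ring
  have e2 : Real.log (t/(1-1/u)) = Real.log t - Real.log (u-1) + Real.log u := by
    have h : (1:ℝ) - 1/u = (u-1)/u := by field_simp
    rw [h, Real.log_div (ne_of_gt ht0) (div_ne_zero (by linarith) (ne_of_gt hu0)), Real.log_div (by linarith) (ne_of_gt hu0)]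
    ring
  rw [e1, e2]
  ring

lemma poissonRisk_def (S : ℕ) (lam mu : ℝ) (P Q : Fin S → ℝ) (T : ℝ)
    (est : (Fin S → ℕ) → (Fin S → ℕ) → ℝ) :
    poissonRisk S lam mu P Q T est = ∑' z : (Fin S → ℕ) × (Fin S → ℕ),
      ENNReal.ofReal (prodPMF (fun i => lam * P i) z.1 * prodPMF (fun i => mu * Q i) z.2 *
        (est z.1 z.2 - T)^2) := rfl

set_option maxHeartbeats 1000000 in
lemma constr1 {S : ℕ} (m n : ℕ) {u : ℝ} (hS : 3 ≤ S) (hu : 2 ≤ u) (hm : 5 ≤ m)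
    (est : (Fin S → ℕ) → (Fin S → ℕ) → ℝ) :
    ∃ P₁ P₂ Q : Fin S → ℝ, MemU u P₁ Q ∧ MemU u P₂ Q ∧
      ENNReal.ofReal ((Real.log u)^2 / (3000 * m)) ≤
        poissonRisk S m n P₁ Q (klDiv P₁ Q) est +
        poissonRisk S m n P₂ Q (klDiv P₂ Q) est := by
  have hS2 : 2 ≤ S := by omega
  have hu0 : (0:ℝ) < u := by linarith
  have hmR : (5:ℝ) ≤ (m:ℝ) := by exact_mod_cast hm
  have hm0 : (0:ℝ) < (m:ℝ) := by linarith
  have hn0 : (0:ℝ) ≤ (n:ℝ) := Nat.cast_nonneg n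
  set a : ℝ := Real.sqrt (m:ℝ) with hadef
  have ha2 : 2 ≤ a := sqrt_ge_two (by linarith)
  have ha0 : 0 < a := by linarith
  have hasq : a^2 = (m:ℝ) := Real.sq_sqrt (by linarith)
  set η : ℝ := 1/(8*a) with hηdef
  have hη0 : 0 < η := by positivity
  have hη16 : η ≤ 1/16 := by
    rw [hηdef]
    rw [div_le_div_iff₀ (by positivity) (by norm_num)]
    linarith
  have hη2 : η^2 = 1/(64*(m:ℝ)) := by
    rw [hηdef, div_pow, mul_pow, hasq]
    norm_num
  set t₂ : ℝ := 1/4 + η with ht₂def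
  have ht₂0 : 0 < t₂ := by rw [ht₂def]; linarith
  have ht₂13 : t₂ ≤ 1/3 := by rw [ht₂def]; linarith
  have ht₂1 : t₂ < 1 := lt_of_le_of_lt ht₂13 (by norm_num)
  have hu1 : 1/u ≤ 1/2 := by
    rw [div_le_div_iff₀ hu0 (by norm_num)]; linarith
  have hu1' : 0 < 1/u := by positivity
  -- the hypothesis vectors
  set P₁ : Fin S → ℝ := vec2 S (1 - (1/4:ℝ)) (1/4) with hP₁
  set P₂ : Fin S → ℝ := vec2 S (1 - t₂) t₂ with hP₂
  set Q : Fin S → ℝ := vec2 S (1/u) (1 - 1/u) with hQ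
  have hQnn : ∀ i, 0 ≤ Q i := by
    intro i; rw [hQ]; unfold vec2; split_ifs <;> [positivity; linarith; norm_num]
  have hP₁nn : ∀ i, 0 ≤ P₁ i := by
    intro i; rw [hP₁]; unfold vec2; split_ifs <;> norm_num
  have hP₂nn : ∀ i, 0 ≤ P₂ i := by
    intro i; rw [hP₂]; unfold vec2; split_ifs <;> [linarith; linarith; norm_num]
  have hMem₁ : MemU u P₁ Q := by
    refine ⟨⟨hP₁nn, ?_⟩, ⟨hQnn, ?_⟩, ?_⟩
    · rw [hP₁]; rw [sum_vec2 hS2]; norm_num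
    · rw [hQ]; rw [sum_vec2 hS2]; ring
    · intro i
      rw [hP₁, hQ]; unfold vec2
      have hc : u * (1/u) = 1 := by field_simp
      have hc2 : u * (1 - 1/u) = u - 1 := by
        rw [mul_sub, mul_one, mul_one_div, div_self (ne_of_gt hu0)]
      split_ifs
      · rw [hc]; norm_num
      · rw [hc2]; linarith
      · simp
  have hMem₂ : MemU u P₂ Q := by
    refine ⟨⟨hP₂nn, ?_⟩, ⟨hQnn, ?_⟩, ?_⟩
    · rw [hP₂]; rw [sum_vec2 hS2]; ring
    · rw [hQ]; rw [sum_vec2 hS2]; ring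
    · intro i
      rw [hP₂, hQ]; unfold vec2
      have hc : u * (1/u) = 1 := by field_simp
      have hc2 : u * (1 - 1/u) = u - 1 := by
        rw [mul_sub, mul_one, mul_one_div, div_self (ne_of_gt hu0)]
      split_ifs
      · rw [hc]; linarith
      · rw [hc2]; linarith [ht₂13]
      · simp
  -- KL values
  have hT₁ : klDiv P₁ Q = ((1-(1/4:ℝ)) * Real.log (1-(1/4:ℝ)) + (1/4:ℝ) * Real.log (1/4:ℝ))
      + Real.log u - (1/4:ℝ) * Real.log (u-1) := by
    rw [hP₁, hQ]; exact klt_formula hS2 (by norm_num) (by norm_num) hu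
  have hT₂ : klDiv P₂ Q = ((1-t₂) * Real.log (1-t₂) + t₂ * Real.log t₂)
      + Real.log u - t₂ * Real.log (u-1) := by
    rw [hP₂, hQ]; exact klt_formula hS2 ht₂0 ht₂1 hu
  -- δ lower bound
  set δ : ℝ := Real.log u/(16*a) with hδdef
  have hδ0 : 0 ≤ δ := by
    rw [hδdef]; exact div_nonneg (Real.log_nonneg (by linarith)) (by positivity)
  have hδbound : δ ≤ klDiv P₁ Q - klDiv P₂ Q := by
    have hent := entropy_step (x := (1/4:ℝ)) (y := t₂) le_rfl (by rw [ht₂def]; linarith) ht₂13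
    have hlog2 : (t₂ - 1/4) * Real.log 2 = η * Real.log 2 := by rw [ht₂def]; ring
    rw [hlog2] at hent
    have h2 : η * (Real.log u / 2) ≤ η * (Real.log 2 + Real.log (u-1)) :=
      mul_le_mul_of_nonneg_left (log_twice_sub_one hu) hη0.le
    have hdiff : klDiv P₁ Q - klDiv P₂ Q =
        ((-((1-t₂) * Real.log (1-t₂)) - t₂ * Real.log t₂) -
         (-((1-(1/4:ℝ)) * Real.log (1-(1/4:ℝ))) - (1/4:ℝ) * Real.log (1/4:ℝ)))
        + η * Real.log (u-1) := by
      rw [hT₁, hT₂, ht₂def]; ring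
    have heq : η * (Real.log u / 2) = δ := by
      rw [hδdef, hηdef]; ring
    linarith
  have hδabs : δ ≤ |klDiv P₁ Q - klDiv P₂ Q| := le_trans hδbound (le_abs_self _)
  -- rates
  set r1x : Fin S → ℝ := fun i => (m:ℝ) * P₁ i with hr1x
  set r2x : Fin S → ℝ := fun i => (m:ℝ) * P₂ i with hr2x
  set ry : Fin S → ℝ := fun i => (n:ℝ) * Q i with hry
  have hr1xnn : ∀ i, 0 ≤ r1x i := fun i => mul_nonneg hm0.le (hP₁nn i)
  have hr2xnn : ∀ i, 0 ≤ r2x i := fun i => mul_nonneg hm0.le (hP₂nn i)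
  have hrynn : ∀ i, 0 ≤ ry i := fun i => mul_nonneg hn0 (hQnn i)
  -- Hellinger-affinity computation
  have hSy : ∑ i, (Real.sqrt (ry i) - Real.sqrt (ry i))^2/2 = 0 := by
    simp
  have hSx : ∑ i, (Real.sqrt (r1x i) - Real.sqrt (r2x i))^2/2
      = (Real.sqrt ((m:ℝ) * (1-(1/4:ℝ))) - Real.sqrt ((m:ℝ) * (1-t₂)))^2/2
        + (Real.sqrt ((m:ℝ) * (1/4:ℝ)) - Real.sqrt ((m:ℝ) * t₂))^2/2 := by
    have e : (fun i => (Real.sqrt (r1x i) - Real.sqrt (r2x i))^2/2)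
        = vec2 S ((Real.sqrt ((m:ℝ) * (1-(1/4:ℝ))) - Real.sqrt ((m:ℝ) * (1-t₂)))^2/2)
            ((Real.sqrt ((m:ℝ) * (1/4:ℝ)) - Real.sqrt ((m:ℝ) * t₂))^2/2) := by
      rw [hr1x, hr2x, hP₁, hP₂]
      exact vec2_comb (fun x y => (Real.sqrt ((m:ℝ)*x) - Real.sqrt ((m:ℝ)*y))^2/2)
        (by simp) _ _ _ _
    calc ∑ i, (Real.sqrt (r1x i) - Real.sqrt (r2x i))^2/2
        = ∑ i, vec2 S _ _ i := by rw [e]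
      _ = _ := sum_vec2 hS2 _ _
  have hc₀ : (Real.sqrt ((m:ℝ) * (1-(1/4:ℝ))) - Real.sqrt ((m:ℝ) * (1-t₂)))^2 ≤ 1/128 := by
    have flip : (Real.sqrt ((m:ℝ) * (1-(1/4:ℝ))) - Real.sqrt ((m:ℝ) * (1-t₂)))^2
        = (Real.sqrt ((m:ℝ) * (1-t₂)) - Real.sqrt ((m:ℝ) * (1-(1/4:ℝ))))^2 := by ring
    have hpos : 0 < (m:ℝ) * (1-t₂) := by
      apply mul_pos hm0; rw [ht₂def]; linarith
    have hle : (m:ℝ) * (1-t₂) ≤ (m:ℝ) * (1-(1/4:ℝ)) := by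
      apply mul_le_mul_of_nonneg_left _ hm0.le
      rw [ht₂def]; linarith
    have hb := sqrt_diff_sq_le hpos hle
    rw [flip]
    refine le_trans hb ?_
    rw [div_le_div_iff₀ (by positivity) (by norm_num)]
    have e : (m:ℝ) * (1-(1/4:ℝ)) - (m:ℝ) * (1-t₂) = (m:ℝ) * η := by rw [ht₂def]; ring
    rw [e, mul_pow]
    have hm2 : ((m:ℝ))^2 * η^2 = (m:ℝ)/64 := by
      rw [hη2]; field_simp
    rw [hm2]
    nlinarith [hη16, hη0, hm0]
  have hc₁ : (Real.sqrt ((m:ℝ) * (1/4:ℝ)) - Real.sqrt ((m:ℝ) * t₂))^2 ≤ 1/16 := by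
    have hpos : 0 < (m:ℝ) * (1/4:ℝ) := by positivity
    have hle : (m:ℝ) * (1/4:ℝ) ≤ (m:ℝ) * t₂ := by
      apply mul_le_mul_of_nonneg_left _ hm0.le
      rw [ht₂def]; linarith
    have hb := sqrt_diff_sq_le hpos hle
    refine le_trans hb ?_
    rw [div_le_div_iff₀ (by positivity) (by norm_num)]
    have e : (m:ℝ) * t₂ - (m:ℝ) * (1/4:ℝ) = (m:ℝ) * η := by rw [ht₂def]; ring
    rw [e, mul_pow]
    have hm2 : ((m:ℝ))^2 * η^2 = (m:ℝ)/64 := by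
      rw [hη2]; field_simp
    rw [hm2]
    nlinarith [hm0]
  -- affinity lower bound
  have hAsum : ∑' z : (Fin S → ℕ) × (Fin S → ℕ),
      ENNReal.ofReal (Real.sqrt ((prodPMF r1x z.1 * prodPMF ry z.2) *
        (prodPMF r2x z.1 * prodPMF ry z.2)))
      = ENNReal.ofReal (Real.exp (-(∑ i, (Real.sqrt (r1x i) - Real.sqrt (r2x i))^2/2)
          + -(∑ i, (Real.sqrt (ry i) - Real.sqrt (ry i))^2/2))) :=
    tsum_ofReal_sqrt_joint hr1xnn hrynn hr2xnn hrynn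
  have hexp : (3/5:ℝ) ≤ Real.exp (-(∑ i, (Real.sqrt (r1x i) - Real.sqrt (r2x i))^2/2)
      + -(∑ i, (Real.sqrt (ry i) - Real.sqrt (ry i))^2/2)) := by
    have harg : (-(∑ i, (Real.sqrt (r1x i) - Real.sqrt (r2x i))^2/2)
        + -(∑ i, (Real.sqrt (ry i) - Real.sqrt (ry i))^2/2))
        = -((∑ i, (Real.sqrt (r1x i) - Real.sqrt (r2x i))^2/2)
            + (∑ i, (Real.sqrt (ry i) - Real.sqrt (ry i))^2/2)) := by ring
    rw [harg]
    apply exp_neg_bound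
    rw [hSy, hSx]
    linarith
  -- apply the two-point bound
  have main := risk_two_point
    (fun z : (Fin S → ℕ) × (Fin S → ℕ) => prodPMF r1x z.1 * prodPMF ry z.2)
    (fun z => prodPMF r2x z.1 * prodPMF ry z.2)
    (fun z => mul_nonneg (prodPMF_nonneg hr1xnn z.1) (prodPMF_nonneg hrynn z.2))
    (fun z => mul_nonneg (prodPMF_nonneg hr2xnn z.1) (prodPMF_nonneg hrynn z.2))
    (tsum_ofReal_joint hr1xnn hrynn) (tsum_ofReal_joint hr2xnn hrynn)
    (klDiv P₁ Q) (klDiv P₂ Q) (fun z => est z.1 z.2) δ (3/5)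
    hδ0 (by norm_num) hδabs
    (by rw [hAsum]; exact ENNReal.ofReal_le_ofReal hexp)
  refine ⟨P₁, P₂, Q, hMem₁, hMem₂, ?_⟩
  rw [poissonRisk_def, poissonRisk_def, ← hr1x, ← hr2x, ← hry]
  refine le_trans ?_ main
  apply ENNReal.ofReal_le_ofReal
  have hδsq : δ^2 = (Real.log u)^2/(256*(m:ℝ)) := by
    rw [hδdef, div_pow, mul_pow, hasq]; norm_num
  have e2 : (3/5:ℝ)^2 * δ^2/4 = (9/25600)*((Real.log u)^2/(m:ℝ)) := by
    rw [hδsq]; ring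
  have e1 : (Real.log u)^2/(3000*(m:ℝ)) = (1/3000)*((Real.log u)^2/(m:ℝ)) := by ring
  rw [e1, e2]
  apply mul_le_mul_of_nonneg_right (by norm_num) (by positivity)

set_option maxHeartbeats 1000000 in
lemma constr2 {S : ℕ} (m n : ℕ) {u : ℝ} (hS : 3 ≤ S) (hu : 2 ≤ u)
    (hn : 16 * u ≤ (n:ℝ)) (est : (Fin S → ℕ) → (Fin S → ℕ) → ℝ) :
    ∃ P Q₁ Q₂ : Fin S → ℝ, MemU u P Q₁ ∧ MemU u P Q₂ ∧
      ENNReal.ofReal (u / (50 * n)) ≤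
        poissonRisk S m n P Q₁ (klDiv P Q₁) est +
        poissonRisk S m n P Q₂ (klDiv P Q₂) est := by
  have hS2 : 2 ≤ S := by omega
  have hu0 : (0:ℝ) < u := by linarith
  have hnR : (32:ℝ) ≤ (n:ℝ) := by linarith
  have hn0 : (0:ℝ) < (n:ℝ) := by linarith
  have hm0 : (0:ℝ) ≤ (m:ℝ) := Nat.cast_nonneg m
  have hun : u/(n:ℝ) ≤ 1/16 := by
    rw [div_le_div_iff₀ hn0 (by norm_num)]; linarith
  set x : ℝ := Real.sqrt (u/(n:ℝ)) with hxdef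
  have hx0 : 0 < x := Real.sqrt_pos.mpr (div_pos hu0 hn0)
  have hx2 : x^2 = u/(n:ℝ) := Real.sq_sqrt (div_pos hu0 hn0).le
  have hx14 : x ≤ 1/4 := by
    have h := Real.sqrt_le_sqrt hun
    rwa [show (1/16:ℝ) = (1/4)^2 by norm_num, Real.sqrt_sq (by norm_num : (0:ℝ) ≤ 1/4)] at h
  have hu1 : 1/u ≤ 1/2 := by rw [div_le_div_iff₀ hu0 (by norm_num)]; linarith
  have hs58 : (1+x)/u ≤ 5/8 := by
    rw [div_le_div_iff₀ hu0 (by norm_num)]; linarith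
  have hs0 : 0 < (1+x)/u := by positivity
  set P : Fin S → ℝ := vec2 S 1 0 with hP
  set Q₁ : Fin S → ℝ := vec2 S (1/u) (1 - 1/u) with hQ₁
  set Q₂ : Fin S → ℝ := vec2 S ((1+x)/u) (1 - (1+x)/u) with hQ₂
  have hPnn : ∀ i, 0 ≤ P i := by
    intro i; rw [hP]; unfold vec2; split_ifs <;> norm_num
  have hQ₁nn : ∀ i, 0 ≤ Q₁ i := by
    intro i; rw [hQ₁]; unfold vec2; split_ifs <;> [positivity; linarith; norm_num]
  have hQ₂nn : ∀ i, 0 ≤ Q₂ i := by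
    intro i; rw [hQ₂]; unfold vec2; split_ifs <;> [positivity; linarith; norm_num]
  have hPsum : ∑ i, P i = 1 := by rw [hP, sum_vec2 hS2]; norm_num
  have hMem₁ : MemU u P Q₁ := by
    refine ⟨⟨hPnn, hPsum⟩, ⟨hQ₁nn, ?_⟩, ?_⟩
    · rw [hQ₁, sum_vec2 hS2]; ring
    · intro i
      rw [hP, hQ₁]; unfold vec2
      have hc : u * (1/u) = 1 := by field_simp
      split_ifs
      · rw [hc]
      · have : 0 ≤ u * (1 - 1/u) := mul_nonneg hu0.le (by linarith)
        linarith
      · simp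
  have hMem₂ : MemU u P Q₂ := by
    refine ⟨⟨hPnn, hPsum⟩, ⟨hQ₂nn, ?_⟩, ?_⟩
    · rw [hQ₂, sum_vec2 hS2]; ring
    · intro i
      rw [hP, hQ₂]; unfold vec2
      have hc : u * ((1+x)/u) = 1 + x := by field_simp
      split_ifs
      · rw [hc]; linarith
      · have : 0 ≤ u * (1 - (1+x)/u) := mul_nonneg hu0.le (by linarith)
        linarith
      · simp
  -- KL values
  have hT₁ : klDiv P Q₁ = Real.log u := by
    rw [hP, hQ₁, klDiv_vec2 hS2]
    rw [one_div_one_div]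
    simp
  have hT₂ : klDiv P Q₂ = Real.log u - Real.log (1+x) := by
    rw [hP, hQ₂, klDiv_vec2 hS2]
    rw [one_div_div]
    rw [Real.log_div (ne_of_gt hu0) (by positivity)]
    simp
  set δ : ℝ := x/2 with hδdef
  have hδ0 : 0 ≤ δ := by positivity
  have hδabs : δ ≤ |klDiv P Q₁ - klDiv P Q₂| := by
    have h1 : klDiv P Q₁ - klDiv P Q₂ = Real.log (1+x) := by rw [hT₁, hT₂]; ring
    have h2 := log_one_add_ge hx0.le (by linarith)
    rw [h1]
    exact le_trans h2 (le_abs_self _)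
  -- rates
  set rx : Fin S → ℝ := fun i => (m:ℝ) * P i with hrx
  set ry1 : Fin S → ℝ := fun i => (n:ℝ) * Q₁ i with hry1
  set ry2 : Fin S → ℝ := fun i => (n:ℝ) * Q₂ i with hry2
  have hrxnn : ∀ i, 0 ≤ rx i := fun i => mul_nonneg hm0 (hPnn i)
  have hry1nn : ∀ i, 0 ≤ ry1 i := fun i => mul_nonneg hn0.le (hQ₁nn i)
  have hry2nn : ∀ i, 0 ≤ ry2 i := fun i => mul_nonneg hn0.le (hQ₂nn i)
  have hSx : ∑ i, (Real.sqrt (rx i) - Real.sqrt (rx i))^2/2 = 0 := by simp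
  have hSy : ∑ i, (Real.sqrt (ry1 i) - Real.sqrt (ry2 i))^2/2
      = (Real.sqrt ((n:ℝ) * (1/u)) - Real.sqrt ((n:ℝ) * ((1+x)/u)))^2/2
        + (Real.sqrt ((n:ℝ) * (1 - 1/u)) - Real.sqrt ((n:ℝ) * (1 - (1+x)/u)))^2/2 := by
    have e : (fun i => (Real.sqrt (ry1 i) - Real.sqrt (ry2 i))^2/2)
        = vec2 S ((Real.sqrt ((n:ℝ) * (1/u)) - Real.sqrt ((n:ℝ) * ((1+x)/u)))^2/2)
            ((Real.sqrt ((n:ℝ) * (1 - 1/u)) - Real.sqrt ((n:ℝ) * (1 - (1+x)/u)))^2/2) := by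
      rw [hry1, hry2, hQ₁, hQ₂]
      exact vec2_comb (fun s t => (Real.sqrt ((n:ℝ)*s) - Real.sqrt ((n:ℝ)*t))^2/2)
        (by simp) _ _ _ _
    calc ∑ i, (Real.sqrt (ry1 i) - Real.sqrt (ry2 i))^2/2
        = ∑ i, vec2 S _ _ i := by rw [e]
      _ = _ := sum_vec2 hS2 _ _
  have hdiffsq : ((n:ℝ)*x/u)^2 = (n:ℝ)/u := by
    have e : ((n:ℝ)*x/u)^2 = (n:ℝ)^2 * x^2 / u^2 := by ring
    rw [e, hx2]
    field_simp
  have hc₀ : (Real.sqrt ((n:ℝ) * (1/u)) - Real.sqrt ((n:ℝ) * ((1+x)/u)))^2 ≤ 1/4 := by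
    have hpos : 0 < (n:ℝ) * (1/u) := by positivity
    have hle : (n:ℝ) * (1/u) ≤ (n:ℝ) * ((1+x)/u) := by
      apply mul_le_mul_of_nonneg_left _ hn0.le
      rw [div_le_div_iff₀ hu0 hu0]
      nlinarith
    refine le_trans (sqrt_diff_sq_le hpos hle) ?_
    have e : (n:ℝ) * ((1+x)/u) - (n:ℝ) * (1/u) = (n:ℝ)*x/u := by ring
    rw [e, hdiffsq]
    rw [div_le_div_iff₀ (by positivity) (by norm_num)]
    field_simp
    linarith [show ((n:ℝ))*4/u = 4*(n:ℝ)/u from by ring]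
  have hc₁ : (Real.sqrt ((n:ℝ) * (1 - 1/u)) - Real.sqrt ((n:ℝ) * (1 - (1+x)/u)))^2 ≤ 1/3 := by
    have flip : (Real.sqrt ((n:ℝ) * (1 - 1/u)) - Real.sqrt ((n:ℝ) * (1 - (1+x)/u)))^2
        = (Real.sqrt ((n:ℝ) * (1 - (1+x)/u)) - Real.sqrt ((n:ℝ) * (1 - 1/u)))^2 := by ring
    have hpos : 0 < (n:ℝ) * (1 - (1+x)/u) := by
      apply mul_pos hn0; linarith
    have hle : (n:ℝ) * (1 - (1+x)/u) ≤ (n:ℝ) * (1 - 1/u) := by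
      apply mul_le_mul_of_nonneg_left _ hn0.le
      have : 1/u ≤ (1+x)/u := by
        rw [div_le_div_iff₀ hu0 hu0]; nlinarith
      linarith
    rw [flip]
    refine le_trans (sqrt_diff_sq_le hpos hle) ?_
    have e : (n:ℝ) * (1 - 1/u) - (n:ℝ) * (1 - (1+x)/u) = (n:ℝ)*x/u := by ring
    rw [e, hdiffsq]
    rw [div_le_div_iff₀ (by positivity) (by norm_num)]
    have h58 : (n:ℝ) * ((1+x)/u) ≤ (n:ℝ) * (5/8) :=
      mul_le_mul_of_nonneg_left hs58 hn0.le
    have hnu2 : (n:ℝ)/u ≤ (n:ℝ)/2 := by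
      rw [div_le_div_iff₀ hu0 (by norm_num)]; nlinarith
    nlinarith
  have hAsum : ∑' z : (Fin S → ℕ) × (Fin S → ℕ),
      ENNReal.ofReal (Real.sqrt ((prodPMF rx z.1 * prodPMF ry1 z.2) *
        (prodPMF rx z.1 * prodPMF ry2 z.2)))
      = ENNReal.ofReal (Real.exp (-(∑ i, (Real.sqrt (rx i) - Real.sqrt (rx i))^2/2)
          + -(∑ i, (Real.sqrt (ry1 i) - Real.sqrt (ry2 i))^2/2))) :=
    tsum_ofReal_sqrt_joint hrxnn hry1nn hrxnn hry2nn
  have hexp : (3/5:ℝ) ≤ Real.exp (-(∑ i, (Real.sqrt (rx i) - Real.sqrt (rx i))^2/2)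
      + -(∑ i, (Real.sqrt (ry1 i) - Real.sqrt (ry2 i))^2/2)) := by
    have harg : (-(∑ i, (Real.sqrt (rx i) - Real.sqrt (rx i))^2/2)
        + -(∑ i, (Real.sqrt (ry1 i) - Real.sqrt (ry2 i))^2/2))
        = -((∑ i, (Real.sqrt (rx i) - Real.sqrt (rx i))^2/2)
            + (∑ i, (Real.sqrt (ry1 i) - Real.sqrt (ry2 i))^2/2)) := by ring
    rw [harg]
    apply exp_neg_bound
    rw [hSx, hSy]
    linarith
  have main := risk_two_point
    (fun z : (Fin S → ℕ) × (Fin S → ℕ) => prodPMF rx z.1 * prodPMF ry1 z.2)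
    (fun z => prodPMF rx z.1 * prodPMF ry2 z.2)
    (fun z => mul_nonneg (prodPMF_nonneg hrxnn z.1) (prodPMF_nonneg hry1nn z.2))
    (fun z => mul_nonneg (prodPMF_nonneg hrxnn z.1) (prodPMF_nonneg hry2nn z.2))
    (tsum_ofReal_joint hrxnn hry1nn) (tsum_ofReal_joint hrxnn hry2nn)
    (klDiv P Q₁) (klDiv P Q₂) (fun z => est z.1 z.2) δ (3/5)
    hδ0 (by norm_num) hδabs
    (by rw [hAsum]; exact ENNReal.ofReal_le_ofReal hexp)
  refine ⟨P, Q₁, Q₂, hMem₁, hMem₂, ?_⟩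
  rw [poissonRisk_def, poissonRisk_def, ← hrx, ← hry1, ← hry2]
  refine le_trans ?_ main
  apply ENNReal.ofReal_le_ofReal
  have hδsq : δ^2 = u/(4*(n:ℝ)) := by
    rw [hδdef, div_pow, hx2]
    ring
  have e2 : (3/5:ℝ)^2 * δ^2/4 = (9/400)*(u/(n:ℝ)) := by
    rw [hδsq]; ring
  have e1 : u/(50*(n:ℝ)) = (1/50)*(u/(n:ℝ)) := by ring
  rw [e1, e2]
  apply mul_le_mul_of_nonneg_right (by norm_num) (by positivity)

/-- Minimax lower bound for the "variance" terms: under the Poisson sampling model,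
every estimator `D̂` satisfies
`sup_{(P,Q) ∈ U_{S,u}} E (D̂ − D(P‖Q))² ≥ c ((ln u)²/m + u/n)`. -/
theorem kl_poisson_variance_lower_bound :
    ∃ c : ℝ, 0 < c ∧
      ∀ (S m n : ℕ) (u : ℝ), Odd S → 3 ≤ S → 2 ≤ u → 5 ≤ m → 16 * u ≤ (n : ℝ) →
        ∀ est : (Fin S → ℕ) → (Fin S → ℕ) → ℝ,
          ENNReal.ofReal (c * ((Real.log u) ^ 2 / (m : ℝ) + u / (n : ℝ))) ≤
            ⨆ (P : Fin S → ℝ) (Q : Fin S → ℝ) (_ : MemU u P Q),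
              poissonRisk S (m : ℝ) (n : ℝ) P Q (klDiv P Q) est := by
  refine ⟨1/12000, by norm_num, ?_⟩
  intro S m n u _ hS hu hm hn est
  have hu0 : (0:ℝ) < u := by linarith
  have hm0 : (0:ℝ) < (m:ℝ) := by
    have : (5:ℝ) ≤ (m:ℝ) := by exact_mod_cast hm
    linarith
  have hn0 : (0:ℝ) < (n:ℝ) := by linarith
  set R := ⨆ (P : Fin S → ℝ) (Q : Fin S → ℝ) (_ : MemU u P Q),
    poissonRisk S (m : ℝ) (n : ℝ) P Q (klDiv P Q) est with hR
  have hle : ∀ P Q : Fin S → ℝ, MemU u P Q →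
      poissonRisk S (m:ℝ) (n:ℝ) P Q (klDiv P Q) est ≤ R := by
    intro P Q h
    rw [hR]
    exact le_iSup_of_le P (le_iSup_of_le Q (le_iSup_of_le h le_rfl))
  obtain ⟨P₁, P₂, Q, h₁, h₂, hA⟩ := constr1 m n hS hu hm est
  obtain ⟨P, Q₁, Q₂, h₁', h₂', hB⟩ := constr2 m n hS hu hn est
  have hA2 : ENNReal.ofReal ((Real.log u)^2/(3000*(m:ℝ))) ≤ 2 * R := by
    refine le_trans hA ?_
    rw [two_mul]
    exact add_le_add (hle _ _ h₁) (hle _ _ h₂)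
  have hB2 : ENNReal.ofReal (u/(50*(n:ℝ))) ≤ 2 * R := by
    refine le_trans hB ?_
    rw [two_mul]
    exact add_le_add (hle _ _ h₁') (hle _ _ h₂')
  set A : ℝ := (Real.log u)^2/(m:ℝ) with hAdef
  set B : ℝ := u/(n:ℝ) with hBdef
  have hA0 : 0 ≤ A := by rw [hAdef]; positivity
  have hB0 : 0 ≤ B := by rw [hBdef]; positivity
  have eA : (Real.log u)^2/(3000*(m:ℝ)) = A/3000 := by rw [hAdef]; ring
  have eB : u/(50*(n:ℝ)) = B/50 := by rw [hBdef]; ring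
  rw [eA] at hA2
  rw [eB] at hB2
  have key : ENNReal.ofReal (2 * (1/12000 * (A + B))) ≤ 2 * R := by
    rcases le_total (A/3000) (B/50) with h | h
    · refine le_trans (ENNReal.ofReal_le_ofReal ?_) hB2
      linarith
    · refine le_trans (ENNReal.ofReal_le_ofReal ?_) hA2
      linarith
  have h2t : ENNReal.ofReal (2 * (1/12000 * (A + B)))
      = 2 * ENNReal.ofReal (1/12000 * (A + B)) := by
    rw [ENNReal.ofReal_mul (by norm_num : (0:ℝ) ≤ 2)]
    norm_num
  rw [h2t] at key
  exact (ENNReal.mul_le_mul_iff_right (by norm_num) (by norm_num)).mp key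

end
end

section
/- Let U_S = {(P,Q) : P, Q ∈ M_S and P ≪ Q (i.e. q_i = 0 implies p_i = 0)}. Then for all integers S ≥ 2, m ≥ 0, n ≥ 0, and every estimator D̂ (any measurable, possibly randomized, function of m i.i.d. samples from P and n i.i.d. samples from Q, independent of each other), sup_{(P,Q)∈U_S} E[(D̂ − D(P‖Q))²] = +∞; consequently the minimax risk for estimating the KL divergence over U_S is infinite. -/
open scoped BigOperators ENNReal

noncomputable section

/-- `(P, Q)` lies in `U_S`: both probability vectors with `P ≪ Q`. -/
def MemUS {S : ℕ} (P Q : Fin S → ℝ) : Prop :=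
  IsProbVec P ∧ IsProbVec Q ∧ ∀ i, Q i = 0 → P i = 0

/-- Probability of observing the sample sequence `xs` from `m` i.i.d. draws from `P`. -/
def iidPMF (S m : ℕ) (P : Fin S → ℝ) (xs : Fin m → Fin S) : ℝ :=
  ∏ j, P (xs j)

/-- Mean squared error of the estimator `est` of the KL divergence based on `m` i.i.d.
samples from `P` and `n` i.i.d. samples from `Q`, independent of each other. -/
def iidRisk (S m n : ℕ) (P Q : Fin S → ℝ)
    (est : (Fin m → Fin S) → (Fin n → Fin S) → ℝ) : ℝ≥0∞ :=
  ∑' z : (Fin m → Fin S) × (Fin n → Fin S),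
    ENNReal.ofReal (iidPMF S m P z.1 * iidPMF S n Q z.2 *
      (est z.1 z.2 - klDiv P Q) ^ 2)

/-- Estimating the KL divergence over `U_S = {(P,Q) : P ≪ Q}` is impossible in the
minimax sense: every estimator has infinite worst-case mean squared error, for any
configuration `(S, m, n)` with `S ≥ 2`. -/
theorem kl_minimax_unbounded (S m n : ℕ) (hS : 2 ≤ S)
    (est : (Fin m → Fin S) → (Fin n → Fin S) → ℝ) :
    (⨆ (P : Fin S → ℝ) (Q : Fin S → ℝ) (_ : MemUS P Q), iidRisk S m n P Q est) = ⊤ := by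
  rw [iSup_eq_top]
  intro b hb
  have h0 : 0 < S := by omega
  have h1 : 1 < S := by omega
  set i0 : Fin S := ⟨0, h0⟩ with hi0
  set i1 : Fin S := ⟨1, h1⟩ with hi1
  have hne : i0 ≠ i1 := by simp [hi0, hi1, Fin.ext_iff]
  set x0 : Fin m → Fin S := fun _ => i0 with hx0
  set y0 : Fin n → Fin S := fun _ => i1 with hy0
  set c : ℝ := est x0 y0 with hc
  have hbR : (0:ℝ) ≤ b.toReal := ENNReal.toReal_nonneg
  set t : ℝ := |c| + 1 + 2 ^ n * (b.toReal + 1) with ht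
  have h2n : (0:ℝ) < 2 ^ n := by positivity
  have ht1 : 1 ≤ t := by
    have := abs_nonneg c
    nlinarith
  set q : ℝ := Real.exp (-t) with hq
  have hq0 : 0 < q := Real.exp_pos _
  have hqhalf : q ≤ 1 / 2 := by
    have h1' : Real.exp (-t) ≤ Real.exp (-1) := Real.exp_le_exp.2 (by linarith)
    have h2 : Real.exp (-1) < 1 / 2 := by
      rw [Real.exp_neg]
      rw [inv_lt_comm₀ (Real.exp_pos _) (by norm_num)]
      have := Real.exp_one_gt_d9
      norm_num
      linarith
    linarith
  have hq1 : q < 1 := by linarith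
  set P : Fin S → ℝ := fun i => if i = i0 then 1 else 0 with hP
  set Q : Fin S → ℝ := fun i => if i = i0 then q else if i = i1 then 1 - q else 0 with hQ
  have hQeq : ∀ i, Q i = (if i = i0 then q else 0) + (if i = i1 then (1 - q) else 0) := by
    intro i
    by_cases h : i = i0
    · subst h; simp [hQ, hne]
    · by_cases h' : i = i1
      · subst h'; simp [hQ, h]
      · simp [hQ, h, h']
  have hPsum : ∑ i, P i = 1 := by simp [hP]
  have hQsum : ∑ i, Q i = 1 := by
    rw [Finset.sum_congr rfl (fun i _ => hQeq i), Finset.sum_add_distrib]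
    simp
  have hMem : MemUS P Q := by
    refine ⟨⟨fun i => ?_, hPsum⟩, ⟨fun i => ?_, hQsum⟩, fun i hi => ?_⟩
    · by_cases h : i = i0 <;> simp [hP, h]
    · rw [hQeq i]
      split_ifs <;> linarith
    · by_cases h : i = i0
      · exfalso; rw [h] at hi; simp [hQ] at hi; linarith
      · simp [hP, h]
  have hKL : klDiv P Q = t := by
    rw [klDiv]
    have : ∀ i ∈ Finset.univ, P i * Real.log (P i / Q i)
        = if i = i0 then Real.log (1 / q) else 0 := by
      intro i _
      by_cases h : i = i0
      · subst h; simp [hP, hQ]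
      · simp [hP, h]
    rw [Finset.sum_congr rfl this]
    simp [hq, Real.log_exp, one_div, Real.log_inv]
  have hPMFx : iidPMF S m P x0 = 1 := by simp [iidPMF, hx0, hP]
  have hPMFy : iidPMF S n Q y0 = (1 - q) ^ n := by
    simp [iidPMF, hy0, hQ, hne.symm]
  have hterm : b.toReal + 1 ≤
      iidPMF S m P x0 * iidPMF S n Q y0 * (est x0 y0 - klDiv P Q) ^ 2 := by
    rw [hPMFx, hPMFy, hKL, ← hc, one_mul]
    have h1q : (1/2:ℝ) ≤ 1 - q := by linarith
    have hpow : (1/2:ℝ) ^ n ≤ (1 - q) ^ n :=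
      pow_le_pow_left₀ (by norm_num) h1q n
    have hcc : c ≤ |c| := le_abs_self c
    have hsq : 2 ^ n * (b.toReal + 1) ≤ (c - t) ^ 2 := by
      have h2 : 2 ^ n * (b.toReal + 1) ≤ t - c := by
        rw [ht]; linarith
      have h3 : (1:ℝ) ≤ t - c := by nlinarith
      nlinarith
    have hp2 : (0:ℝ) < (1/2:ℝ) ^ n := by positivity
    have hmul := mul_le_mul hpow hsq (by positivity) (by positivity)
    have hprod : (1/2:ℝ) ^ n * 2 ^ n = 1 := by
      rw [← mul_pow]; norm_num
    have heq : (1/2:ℝ) ^ n * (2 ^ n * (b.toReal + 1)) = b.toReal + 1 := by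
      rw [← mul_assoc, hprod, one_mul]
    rw [← heq]; exact hmul
  refine ⟨P, lt_of_lt_of_le ?_ (le_iSup_of_le Q (le_iSup (fun _ => iidRisk S m n P Q est) hMem))⟩
  have hle : ENNReal.ofReal (iidPMF S m P x0 * iidPMF S n Q y0 *
      (est x0 y0 - klDiv P Q) ^ 2) ≤ iidRisk S m n P Q est := by
    exact ENNReal.le_tsum ((x0, y0) : (Fin m → Fin S) × (Fin n → Fin S))
  refine lt_of_lt_of_le ?_ hle
  rw [ENNReal.lt_ofReal_iff_toReal_lt hb.ne]
  linarith

end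
end

section
/- There exists a universal constant C > 0 such that for all reals 0 < a < b and every positive integer n, the best uniform polynomial approximation error of ln x on [a,b] satisfies E_n[ln x; [a,b]] ≤ C·W(b/(a·n²)), where W(t) = t/e for t ≤ e and W(t) = ln t for t > e. -/
open scoped BigOperators

noncomputable section

/-- Best uniform polynomial approximation error of degree `≤ n` of `f` on `[a,b]`:
`E_n[f; [a,b]] = inf_{deg P ≤ n} sup_{x ∈ [a,b]} |f(x) − P(x)|`. -/
def bestApproxErr (n : ℕ) (f : ℝ → ℝ) (a b : ℝ) : ℝ :=
  ⨅ p : {p : Polynomial ℝ // p.degree ≤ n},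
    ⨆ x ∈ Set.Icc a b, |f x - (p : Polynomial ℝ).eval x|

/-- The function `W`: `W(t) = t/e` for `t ≤ e`, and `W(t) = ln t` for `t > e`. -/
def Wfun (t : ℝ) : ℝ :=
  if t ≤ Real.exp 1 then t / Real.exp 1 else Real.log t

/-- The tail term `2/(k ρ^k)`. -/
def hfun (ρ : ℝ) (k : ℕ) : ℝ := 2 / (k * ρ ^ k)

/-- The Joukowski-type parameter for the interval `[a,b]`. -/
def rr (a b : ℝ) : ℝ := (Real.sqrt b + Real.sqrt a) / (Real.sqrt b - Real.sqrt a)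


lemma one_lt_rr {a b : ℝ} (ha : 0 < a) (hab : a < b) : 1 < rr a b := by
  have hα : 0 < Real.sqrt a := Real.sqrt_pos.2 ha
  have hβ : Real.sqrt a < Real.sqrt b := Real.sqrt_lt_sqrt ha.le hab
  rw [rr, lt_div_iff₀ (by linarith)]
  linarith

lemma natDegree_T_le : ∀ k : ℕ, (Polynomial.Chebyshev.T ℝ (k : ℤ)).natDegree ≤ k := by
  have key : ∀ k : ℕ, (Polynomial.Chebyshev.T ℝ (k : ℤ)).natDegree ≤ k ∧
      (Polynomial.Chebyshev.T ℝ ((k : ℤ) + 1)).natDegree ≤ k + 1 := by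
    intro k
    induction k with
    | zero =>
      constructor
      · simp [Polynomial.Chebyshev.T_zero]
      · simpa using Polynomial.natDegree_X_le (R := ℝ)
    | succ k ih =>
      obtain ⟨ih1, ih2⟩ := ih
      refine ⟨by exact_mod_cast ih2, ?_⟩
      have h2 : (((k + 1 : ℕ) : ℤ) + 1) = (k : ℤ) + 2 := by push_cast; ring
      rw [h2, Polynomial.Chebyshev.T_add_two]
      refine le_trans (Polynomial.natDegree_sub_le _ _) (max_le ?_ (le_trans ih1 (by omega)))
      refine le_trans (Polynomial.natDegree_mul_le) ?_
      have hX : (2 * Polynomial.X : Polynomial ℝ).natDegree ≤ 1 :=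
        le_trans Polynomial.natDegree_mul_le (by simp)
      have : (Polynomial.Chebyshev.T ℝ ((k : ℤ) + 1)).natDegree ≤ k + 1 := ih2
      omega
  exact fun k => (key k).1

lemma hfun_nonneg {ρ : ℝ} (hρ : 1 < ρ) (j : ℕ) : 0 ≤ hfun ρ j := by
  have : (0:ℝ) < ρ := lt_trans one_pos hρ
  unfold hfun; positivity

lemma hfun_le_geom {ρ : ℝ} (hρ : 1 < ρ) {m : ℕ} (hm : 1 ≤ m) (k : ℕ) :
    hfun ρ (k + m) ≤ (2 / (m * ρ ^ m)) * (ρ⁻¹) ^ k := by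
  have hρ0 : (0 : ℝ) < ρ := lt_trans one_pos hρ
  have hm' : (1:ℝ) ≤ (m:ℝ) := by exact_mod_cast hm
  have hcancel : ρ ^ k * (ρ⁻¹) ^ k = 1 := by
    rw [← mul_pow, mul_inv_cancel₀ (ne_of_gt hρ0), one_pow]
  have hm0 : (0:ℝ) < (m:ℝ) := by exact_mod_cast hm
  have hρne : ρ ≠ 0 := ne_of_gt hρ0
  have hmne : (m:ℝ) ≠ 0 := ne_of_gt hm0
  have heq : (2 / (m * ρ ^ m)) * (ρ⁻¹) ^ k = 2 / ((m : ℝ) * (ρ ^ k * ρ ^ m)) := by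
    field_simp
    ring_nf
    exact hcancel
  rw [heq]
  unfold hfun
  have hkm : ((k + m : ℕ) : ℝ) = (k : ℝ) + m := by push_cast; ring
  rw [hkm, pow_add, div_le_div_iff₀ (by positivity) (by positivity)]
  nlinarith [mul_pos (pow_pos hρ0 k) (pow_pos hρ0 m), Nat.cast_nonneg (α := ℝ) k]

lemma summable_h_shift {ρ : ℝ} (hρ : 1 < ρ) {m : ℕ} (hm : 1 ≤ m) :
    Summable (fun k : ℕ => hfun ρ (k + m)) := by
  have hρ0 : (0 : ℝ) < ρ := lt_trans one_pos hρ
  have hinv : ρ⁻¹ < 1 := inv_lt_one_of_one_lt₀ hρ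
  exact Summable.of_nonneg_of_le (fun k => hfun_nonneg hρ _) (hfun_le_geom hρ hm)
    ((summable_geometric_of_lt_one (by positivity) hinv).mul_left _)

lemma tsum_h_shift_le {ρ : ℝ} (hρ : 1 < ρ) {m : ℕ} (hm : 1 ≤ m) :
    (∑' k : ℕ, hfun ρ (k + m)) ≤ 2 / (m * ρ ^ m) * (1 - ρ⁻¹)⁻¹ := by
  have hρ0 : (0 : ℝ) < ρ := lt_trans one_pos hρ
  have hinv : ρ⁻¹ < 1 := inv_lt_one_of_one_lt₀ hρ
  have hgs := summable_geometric_of_lt_one (r := ρ⁻¹) (by positivity) hinv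
  calc (∑' k : ℕ, hfun ρ (k + m)) ≤ ∑' k : ℕ, (2 / (m * ρ ^ m)) * (ρ⁻¹) ^ k :=
        Summable.tsum_le_tsum (hfun_le_geom hρ hm) (summable_h_shift hρ hm) (hgs.mul_left _)
    _ = (2 / (m * ρ ^ m)) * (1 - ρ⁻¹)⁻¹ := by
        rw [tsum_mul_left, tsum_geometric_of_lt_one (by positivity) hinv]


lemma hasSum_log_series {ρ : ℝ} (hρ : 1 < ρ) (θ : ℝ) :
    HasSum (fun k : ℕ => 2 * (-1 : ℝ) ^ (k + 1) * Real.cos (k * θ) / (k * ρ ^ k))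
      (Real.log (1 + 2 * Real.cos θ / ρ + (ρ ^ 2)⁻¹)) := by
  have hρ0 : (0 : ℝ) < ρ := lt_trans one_pos hρ
  have hρne : ρ ≠ 0 := ne_of_gt hρ0
  set v : ℂ := ((ρ⁻¹ : ℝ) : ℂ) * Complex.exp (θ * Complex.I) with hv
  have hnv : ‖v‖ < 1 := by
    rw [hv, norm_mul, Complex.norm_exp_ofReal_mul_I,
      mul_one, Complex.norm_real, Real.norm_eq_abs, abs_of_pos (inv_pos.2 hρ0)]
    exact inv_lt_one_of_one_lt₀ hρ
  have h0 := Complex.hasSum_taylorSeries_log hnv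
  -- rewrite the terms as real scalar multiples of exp(i k θ)
  have hterm : ∀ k : ℕ, (-1 : ℂ) ^ (k + 1) * v ^ k / k
      = (((-1 : ℝ) ^ (k + 1) / (k * ρ ^ k)) : ℝ) • Complex.exp (((k * θ : ℝ)) * Complex.I) := by
    intro k
    rcases Nat.eq_zero_or_pos k with rfl | hk
    · simp
    have hkne : ((k : ℂ)) ≠ 0 := Nat.cast_ne_zero.2 hk.ne'
    have hexp : Complex.exp (((k * θ : ℝ)) * Complex.I) = Complex.exp (θ * Complex.I) ^ k := by
      rw [← Complex.exp_nat_mul]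
      push_cast
      ring_nf
    rw [hexp, Complex.real_smul, hv, mul_pow]
    push_cast
    field_simp
    ring
  rw [funext hterm] at h0
  -- take real parts
  have h1 := (Complex.reCLM.hasSum h0)
  have hre : ∀ k : ℕ, Complex.reCLM ((((-1 : ℝ) ^ (k + 1) / (k * ρ ^ k)) : ℝ)
      • Complex.exp (((k * θ : ℝ)) * Complex.I))
      = (-1 : ℝ) ^ (k + 1) / (k * ρ ^ k) * Real.cos (k * θ) := by
    intro k
    rw [Complex.reCLM_apply, Complex.smul_re, Complex.exp_ofReal_mul_I_re, smul_eq_mul]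
  rw [funext hre] at h1
  have h2 := h1.mul_left 2
  -- identify the sum
  have hsum_eq : 2 * Complex.reCLM (Complex.log (1 + v))
      = Real.log (1 + 2 * Real.cos θ / ρ + (ρ ^ 2)⁻¹) := by
    have hvne : 1 + v ≠ 0 := by
      intro h
      have hveq : v = -1 := by linear_combination h
      rw [hveq] at hnv
      simp at hnv
    rw [Complex.reCLM_apply, Complex.log_re, Complex.norm_def,
      Real.log_sqrt (Complex.normSq_nonneg _)]
    have hnsq : Complex.normSq (1 + v) = 1 + 2 * Real.cos θ / ρ + (ρ ^ 2)⁻¹ := by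
      rw [Complex.normSq_apply]
      have hre1 : (1 + v).re = 1 + ρ⁻¹ * Real.cos θ := by
        simp [hv, Complex.exp_ofReal_mul_I_re]
      have him1 : (1 + v).im = ρ⁻¹ * Real.sin θ := by
        simp [hv, Complex.exp_ofReal_mul_I_im]
      rw [hre1, him1]
      have hpy := Real.sin_sq_add_cos_sq θ
      field_simp
      linear_combination hpy
    rw [hnsq]
    ring
  rw [hsum_eq] at h2
  convert h2 using 2 with k
  case e'_5 => ring
  case e'_3 => rfl
lemma joukowski {α β u : ℝ} (hα : 0 < α) (hαβ : α < β) :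
    ((β + α) ^ 2 / 4) * (1 + 2 * u / ((β + α) / (β - α)) + (((β + α) / (β - α)) ^ 2)⁻¹)
      = (β ^ 2 + α ^ 2) / 2 + (β ^ 2 - α ^ 2) / 2 * u := by
  have h1 : β - α ≠ 0 := ne_of_gt (by linarith)
  have h2 : β + α ≠ 0 := ne_of_gt (by linarith)
  field_simp
  ring

lemma exists_poly (a b : ℝ) (n : ℕ) (ha : 0 < a) (hab : a < b) :
    ∃ P : Polynomial ℝ, P.degree ≤ n ∧ ∀ x ∈ Set.Icc a b,
      |Real.log x - P.eval x| ≤ ∑' k : ℕ, hfun (rr a b) (k + (n + 1)) := by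
  have hb0 : 0 < b := lt_trans ha hab
  set α := Real.sqrt a with hαdef
  set β := Real.sqrt b with hβdef
  have hα0 : 0 < α := Real.sqrt_pos.2 ha
  have hαβ : α < β := Real.sqrt_lt_sqrt ha.le hab
  have ha2 : α ^ 2 = a := Real.sq_sqrt ha.le
  have hb2 : β ^ 2 = b := Real.sq_sqrt hb0.le
  set ρ := rr a b with hρdef
  have hρval : ρ = (β + α) / (β - α) := rfl
  have hρ1 : 1 < ρ := one_lt_rr ha hab
  have hρ0 : 0 < ρ := lt_trans one_pos hρ1
  have hba : 0 < b - a := by linarith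
  set q : Polynomial ℝ := Polynomial.C (2 / (b - a)) * (Polynomial.X - Polynomial.C ((a + b) / 2)) with hqdef
  set P : Polynomial ℝ := Polynomial.C (Real.log ((β + α) ^ 2 / 4)) +
      ∑ k ∈ Finset.range (n + 1),
        Polynomial.C (2 * (-1 : ℝ) ^ (k + 1) / (k * ρ ^ k)) *
          ((Polynomial.Chebyshev.T ℝ (k : ℤ)).comp q) with hPdef
  refine ⟨P, ?_, ?_⟩
  · apply Polynomial.degree_le_of_natDegree_le
    refine le_trans (Polynomial.natDegree_add_le _ _) (max_le (by simp) ?_)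
    refine Polynomial.natDegree_sum_le_of_forall_le _ _ fun k hk => ?_
    refine le_trans Polynomial.natDegree_mul_le ?_
    have h1 : ((Polynomial.Chebyshev.T ℝ (k : ℤ)).comp q).natDegree ≤ k * 1 := by
      refine le_trans Polynomial.natDegree_comp_le ?_
      have hq1 : q.natDegree ≤ 1 := by
        refine le_trans Polynomial.natDegree_mul_le ?_
        simp [Polynomial.natDegree_X_sub_C]
      exact Nat.mul_le_mul (natDegree_T_le k) hq1
    have hk' : k ≤ n := by
      have := Finset.mem_range.1 hk; omega
    simp only [Polynomial.natDegree_C, zero_add]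
    omega
  · intro x hx
    obtain ⟨hax, hxb⟩ := hx
    have hx0 : 0 < x := lt_of_lt_of_le ha hax
    set θ := Real.arccos ((2 / (b - a)) * (x - (a + b) / 2)) with hθdef
    have hmem1 : -1 ≤ (2 / (b - a)) * (x - (a + b) / 2) := by
      rw [div_mul_eq_mul_div, le_div_iff₀ hba]
      linarith
    have hmem2 : (2 / (b - a)) * (x - (a + b) / 2) ≤ 1 := by
      rw [div_mul_eq_mul_div, div_le_one hba]
      linarith
    have hcos : Real.cos θ = (2 / (b - a)) * (x - (a + b) / 2) :=
      Real.cos_arccos hmem1 hmem2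
    have hQx : x = ((β + α) ^ 2 / 4) * (1 + 2 * Real.cos θ / ρ + (ρ ^ 2)⁻¹) := by
      have hx' : x = (a + b) / 2 + (b - a) / 2 * Real.cos θ := by
        rw [hcos]
        field_simp
        ring
      rw [hρval, joukowski hα0 hαβ, ha2, hb2]
      rw [hx']
      ring
    have hS := hasSum_log_series hρ1 θ
    set Q := 1 + 2 * Real.cos θ / ρ + (ρ ^ 2)⁻¹ with hQdef
    have hbase : (0:ℝ) < (β + α) ^ 2 / 4 := by positivity
    have hQpos : 0 < Q := by
      by_contra h
      push_neg at h
      nlinarith [mul_nonpos_of_nonneg_of_nonpos hbase.le h]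
    have hlogx : Real.log x = Real.log ((β + α) ^ 2 / 4) + Real.log Q := by
      rw [hQx, Real.log_mul (ne_of_gt hbase) (ne_of_gt hQpos)]
    set g : ℕ → ℝ := fun k : ℕ => 2 * (-1 : ℝ) ^ (k + 1) * Real.cos (k * θ) / (k * ρ ^ k)
      with hgdef
    have heval : P.eval x
        = Real.log ((β + α) ^ 2 / 4) + ∑ k ∈ Finset.range (n + 1), g k := by
      rw [hPdef, Polynomial.eval_add, Polynomial.eval_C, Polynomial.eval_finset_sum]
      congr 1
      refine Finset.sum_congr rfl fun k hk => ?_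
      rw [Polynomial.eval_mul, Polynomial.eval_C, Polynomial.eval_comp]
      have hq : q.eval x = (2 / (b - a)) * (x - (a + b) / 2) := by
        simp [hqdef]
      rw [hq, ← hcos, Polynomial.Chebyshev.T_real_cos]
      rw [hgdef]
      push_cast
      ring
    have hsum : Summable g := hS.summable
    have hsplit := Summable.sum_add_tsum_nat_add (f := g) (n + 1) hsum
    have htsum : (∑' k, g k) = Real.log Q := hS.tsum_eq
    have hdiff : Real.log x - P.eval x = ∑' k : ℕ, g (k + (n + 1)) := by
      rw [hlogx, heval]
      have : (∑ k ∈ Finset.range (n + 1), g k) + (∑' k : ℕ, g (k + (n + 1))) = Real.log Q := by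
        rw [hsplit, htsum]
      linarith
    rw [hdiff]
    have habs : ∀ j : ℕ, |g j| ≤ hfun ρ j := by
      intro j
      rcases Nat.eq_zero_or_pos j with rfl | hj
      · simp [hgdef, hfun]
      · have hj' : (0:ℝ) < (j:ℝ) := by exact_mod_cast hj
        rw [hgdef]
        simp only
        rw [abs_div, abs_mul, abs_mul]
        rw [abs_of_pos (by positivity : (0:ℝ) < (j:ℝ) * ρ ^ j)]
        have h2 : |(2:ℝ)| = 2 := by norm_num
        have h3 : |(-1:ℝ) ^ (j + 1)| = 1 := by
          rw [abs_pow, abs_neg, abs_one, one_pow]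
        rw [h2, h3, mul_one]
        unfold hfun
        gcongr
        nlinarith [Real.abs_cos_le_one ((j:ℝ) * θ)]
    have hsummable_abs : Summable (fun k : ℕ => |g (k + (n + 1))|) := by
      refine Summable.of_nonneg_of_le (fun k => abs_nonneg _) (fun k => habs _)
        (summable_h_shift hρ1 (by omega))
    calc |∑' k : ℕ, g (k + (n + 1))| ≤ ∑' k : ℕ, |g (k + (n + 1))| := by
          have := norm_tsum_le_tsum_norm (f := fun k : ℕ => g (k + (n + 1)))
            (by simpa [Real.norm_eq_abs] using hsummable_abs)
          simpa [Real.norm_eq_abs] using this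
      _ ≤ ∑' k : ℕ, hfun ρ (k + (n + 1)) :=
          Summable.tsum_le_tsum (fun k => habs _) hsummable_abs (summable_h_shift hρ1 (by omega))
lemma hfun_succ_le_log {ρ : ℝ} (hρ : 1 < ρ) {c : ℕ} (hc : 1 ≤ c) :
    hfun ρ (c + 1) ≤ 2 * Real.log ((c : ℝ) + 1) - 2 * Real.log c := by
  have hρ0 : (0:ℝ) < ρ := lt_trans one_pos hρ
  have hc' : (1:ℝ) ≤ (c:ℝ) := by exact_mod_cast hc
  have h1 : hfun ρ (c + 1) ≤ 2 / ((c:ℝ) + 1) := by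
    unfold hfun
    push_cast
    rw [div_le_div_iff₀ (by positivity) (by positivity)]
    nlinarith [one_le_pow₀ (n := c + 1) hρ.le, pow_pos hρ0 (c + 1)]
  have h2 : 1 / ((c:ℝ) + 1) ≤ Real.log ((c:ℝ) + 1) - Real.log c := by
    have hlog := Real.log_le_sub_one_of_pos (show (0:ℝ) < (c:ℝ)/((c:ℝ)+1) by positivity)
    rw [Real.log_div (by linarith) (by linarith)] at hlog
    have heq : (c:ℝ)/((c:ℝ)+1) - 1 = -(1/((c:ℝ)+1)) := by field_simp; ring
    linarith
  have h3 : 2/((c:ℝ)+1) = 2*(1/((c:ℝ)+1)) := by ring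
  linarith

set_option maxHeartbeats 2000000 in
lemma tail_le_W (a b : ℝ) (n : ℕ) (ha : 0 < a) (hab : a < b) (hn : 1 ≤ n) :
    (∑' k : ℕ, hfun (rr a b) (k + (n + 1))) ≤ 7 * Wfun (b / (a * (n : ℝ) ^ 2)) := by
  have hb0 : 0 < b := lt_trans ha hab
  have hn' : (1:ℝ) ≤ (n:ℝ) := by exact_mod_cast hn
  have hnn : (0:ℝ) < (n:ℝ) := by linarith
  obtain ⟨α, hαdef⟩ : ∃ x : ℝ, x = Real.sqrt a := ⟨_, rfl⟩
  obtain ⟨β, hβdef⟩ : ∃ x : ℝ, x = Real.sqrt b := ⟨_, rfl⟩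
  have hα0 : 0 < α := hαdef ▸ Real.sqrt_pos.2 ha
  have hαβ : α < β := by rw [hαdef, hβdef]; exact Real.sqrt_lt_sqrt ha.le hab
  have hβ0 : 0 < β := lt_trans hα0 hαβ
  have ha2 : α ^ 2 = a := by rw [hαdef]; exact Real.sq_sqrt ha.le
  have hb2 : β ^ 2 = b := by rw [hβdef]; exact Real.sq_sqrt hb0.le
  have hρ1' : 1 < rr a b := one_lt_rr ha hab
  obtain ⟨ρ, hρval⟩ : ∃ r : ℝ, r = (β + α) / (β - α) := ⟨_, rfl⟩
  have hrr : rr a b = ρ := by rw [hρval, hαdef, hβdef]; rfl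
  rw [hrr] at hρ1' ⊢
  have hρ1 : 1 < ρ := hρ1'
  have hρ0 : 0 < ρ := lt_trans one_pos hρ1
  obtain ⟨t, htdef⟩ : ∃ x : ℝ, x = b / (a * (n:ℝ)^2) := ⟨_, rfl⟩
  rw [← htdef]
  have ht0 : 0 < t := by rw [htdef]; positivity
  have htab : t = β^2/(α^2*(n:ℝ)^2) := by rw [htdef, ha2, hb2]
  have hρinv : (1 - ρ⁻¹)⁻¹ = (β + α) / (2 * α) := by
    rw [hρval]
    rw [show (1 : ℝ) - ((β + α)/(β - α))⁻¹ = 2*α/(β + α) by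
      rw [inv_div]; field_simp; ring]
    rw [inv_div]
  have hρmul : ρ*(β - α) = β + α := by
    rw [hρval]; exact div_mul_cancel₀ _ (ne_of_gt (by linarith))
  by_cases hcase : t ≤ Real.exp 1
  · -- small t regime
    rw [Wfun, if_pos hcase]
    have hstep : 1 + 2*α/β ≤ ρ := by
      have h0 : 1 + 2*α/β = (β + 2*α)/β := by field_simp
      rw [h0, hρval, div_le_div_iff₀ hβ0 (by linarith)]
      nlinarith
    have hber : 1 + (n:ℝ)*(2*α/β) ≤ (1 + 2*α/β)^n := by
      have hpos : (0:ℝ) ≤ 2*α/β := by positivity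
      exact one_add_mul_le_pow (by linarith) n
    have hpowle : (1 + 2*α/β)^n ≤ ρ^n := pow_le_pow_left₀ (by positivity) hstep n
    have hρn : 2*(n:ℝ)*α/β ≤ ρ^n := by
      have he : (n:ℝ)*(2*α/β) = 2*(n:ℝ)*α/β := by ring
      linarith [hber, hpowle, he]
    have hρn1 : (2*(n:ℝ)*α/β) * ρ ≤ ρ^(n+1) := by
      rw [pow_succ]
      exact mul_le_mul_of_nonneg_right hρn hρ0.le
    have hXpos : (0:ℝ) < 2*(n:ℝ)*α/β := div_pos (mul_pos (mul_pos (by norm_num) hnn) hα0) hβ0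
    calc (∑' k : ℕ, hfun ρ (k + (n + 1)))
        ≤ 2 / ((n+1 : ℕ) * ρ^(n+1)) * (1 - ρ⁻¹)⁻¹ := tsum_h_shift_le hρ1 (by omega)
      _ = 2 / (((n:ℝ)+1) * ρ^(n+1)) * ((β + α)/(2*α)) := by rw [hρinv]; push_cast; ring_nf
      _ ≤ 2 / ((n:ℝ) * ((2*(n:ℝ)*α/β) * ρ)) * ((β + α)/(2*α)) := by
          refine mul_le_mul_of_nonneg_right ?_ (by positivity)
          rw [div_le_div_iff₀ (by positivity) (by positivity)]
          nlinarith [mul_le_mul_of_nonneg_left hρn1 hnn.le, pow_pos hρ0 (n+1)]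
      _ = β*(β + α) / (2*(n:ℝ)^2*α^2*ρ) := by
          field_simp
      _ = β*(β - α) / (2*(n:ℝ)^2*α^2) := by
          rw [← hρmul]
          field_simp
      _ ≤ β*β / (2*(n:ℝ)^2*α^2) := by gcongr; linarith
      _ = t/2 := by
          rw [htab]
          field_simp
      _ ≤ 7 * (t / Real.exp 1) := by
          rw [show (7:ℝ) * (t / Real.exp 1) = 7*t/Real.exp 1 by ring,
            div_le_div_iff₀ (by norm_num) (Real.exp_pos 1)]
          nlinarith [Real.exp_one_lt_d9, ht0]
  · -- large t regime
    push_neg at hcase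
    rw [Wfun, if_neg (not_le.2 hcase)]
    have hlogt : 1 ≤ Real.log t := by
      rw [show (1:ℝ) = Real.log (Real.exp 1) by rw [Real.log_exp]]
      exact Real.log_le_log (Real.exp_pos 1) hcase.le
    have ht1 : (1:ℝ) < t := lt_trans (by linarith [Real.exp_one_gt_d9]) hcase
    have htsq : t = (β/(α*(n:ℝ)))^2 := by
      rw [htab]
      field_simp
    have hsq : Real.sqrt t = β/(α*(n:ℝ)) := by
      rw [htsq, Real.sqrt_sq (by positivity)]
    have hst1 : 1 < Real.sqrt t := by
      have := Real.sqrt_lt_sqrt (by norm_num : (0:ℝ) ≤ 1) ht1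
      rwa [Real.sqrt_one] at this
    set K := ⌈Real.sqrt t⌉₊ with hKdef
    have hK2 : 2 ≤ K := by
      have : 1 < K := Nat.lt_ceil.2 (by exact_mod_cast hst1)
      omega
    have hK0 : (0:ℝ) < (K:ℝ) := by
      have : (0:ℕ) < K := by omega
      exact_mod_cast this
    have hKge : Real.sqrt t ≤ (K:ℝ) := Nat.le_ceil _
    have hKle : (K:ℝ) ≤ 2*Real.sqrt t := by
      have h2 : (K:ℝ) < Real.sqrt t + 1 := Nat.ceil_lt_add_one (Real.sqrt_nonneg t)
      linarith
    set m := n * (K - 1) with hmdef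
    have hm1 : 1 ≤ m := by
      have h1 : 1 ≤ K - 1 := by omega
      calc 1 = 1 * 1 := by omega
        _ ≤ n * (K - 1) := Nat.mul_le_mul hn h1
    have hmn : m + n = n * K := by
      have hK1 : K - 1 + 1 = K := by omega
      calc m + n = n * ((K-1) + 1) := by rw [hmdef]; ring
        _ = n * K := by rw [hK1]
    have hsplit := Summable.sum_add_tsum_nat_add (f := fun k : ℕ => hfun ρ (k + (n+1))) m
      (summable_h_shift hρ1 (show 1 ≤ n+1 by omega))
    have hshift_eq : (fun i : ℕ => hfun ρ ((i + m) + (n+1)))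
        = fun i : ℕ => hfun ρ (i + (n*K+1)) := by
      funext i
      congr 1
      omega
    rw [hshift_eq] at hsplit
    -- part 1
    have hpart1 : (∑ j ∈ Finset.range m, hfun ρ (j + (n+1))) ≤ 2*Real.log K := by
      have hterm : ∀ j ∈ Finset.range m,
          hfun ρ (j + (n+1)) ≤ (fun j : ℕ => 2*Real.log ((n+j : ℕ) : ℝ)) (j+1)
            - (fun j : ℕ => 2*Real.log ((n+j : ℕ) : ℝ)) j := by
        intro j _
        simp only
        have hidx : j + (n+1) = (n+j) + 1 := by omega
        rw [hidx]
        have h := hfun_succ_le_log hρ1 (c := n + j) (by omega)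
        have hcast : ((n + (j+1) : ℕ) : ℝ) = ((n + j : ℕ) : ℝ) + 1 := by push_cast; ring
        rw [hcast]
        exact h
      calc (∑ j ∈ Finset.range m, hfun ρ (j + (n+1)))
          ≤ ∑ j ∈ Finset.range m, ((fun j : ℕ => 2*Real.log ((n+j : ℕ) : ℝ)) (j+1)
              - (fun j : ℕ => 2*Real.log ((n+j : ℕ) : ℝ)) j) := Finset.sum_le_sum hterm
        _ = 2*Real.log ((n+m : ℕ) : ℝ) - 2*Real.log ((n+0 : ℕ) : ℝ) := by
            rw [Finset.sum_range_sub (f := fun j : ℕ => 2*Real.log ((n+j : ℕ) : ℝ))]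
        _ = 2*Real.log K := by
            have hnm : ((n + m : ℕ) : ℝ) = (n:ℝ) * K := by
              rw [Nat.add_comm n m, hmn]; push_cast; ring
            rw [hnm, Nat.add_zero, Real.log_mul (by positivity) (by positivity)]
            ring
    -- part 2
    have hnK1 : (1:ℝ) ≤ (n:ℝ)*K := by nlinarith
    have hβnk : β ≤ (n:ℝ)*K*α := by
      have h1 : β/(α*(n:ℝ)) ≤ (K:ℝ) := hsq ▸ hKge
      rw [div_le_iff₀ (by positivity)] at h1
      have he : (K:ℝ)*(α*(n:ℝ)) = (n:ℝ)*K*α := by ring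
      linarith
    have hpart2 : (∑' i : ℕ, hfun ρ (i + (n*K+1))) ≤ 2 := by
      have hpow1 : (1:ℝ) ≤ ρ^(n*K+1) := one_le_pow₀ hρ1.le
      calc (∑' i : ℕ, hfun ρ (i + (n*K+1)))
          ≤ 2 / ((n*K+1 : ℕ) * ρ^(n*K+1)) * (1 - ρ⁻¹)⁻¹ := tsum_h_shift_le hρ1 (by omega)
        _ = 2 / (((n:ℝ)*K+1) * ρ^(n*K+1)) * ((β + α)/(2*α)) := by
            rw [hρinv]; push_cast; ring_nf
        _ ≤ 2 / (((n:ℝ)*K) * 1) * ((β + α)/(2*α)) := by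
            refine mul_le_mul_of_nonneg_right ?_ (by positivity)
            rw [div_le_div_iff₀ (by nlinarith) (by nlinarith)]
            nlinarith
        _ = (β + α) / (((n:ℝ)*K) * α) := by
            rw [mul_one]
            field_simp
        _ ≤ 2 := by
            rw [div_le_iff₀ (by nlinarith)]
            nlinarith
    -- combine
    have hlogK : Real.log K ≤ Real.log 2 + Real.log t / 2 := by
      calc Real.log K ≤ Real.log (2*Real.sqrt t) :=
            Real.log_le_log hK0 hKle
        _ = Real.log 2 + Real.log t / 2 := by
            rw [Real.log_mul (by norm_num) (by positivity), Real.log_sqrt ht0.le]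
    rw [← hsplit]
    linarith [hpart1, hpart2, hlogK, hlogt, Real.log_two_lt_d9]

/-- Best polynomial approximation of the logarithm:
`E_n[ln x; [a,b]] ≤ C · W(b/(a n²))` for a universal constant `C`. -/
theorem log_best_approx_bound :
    ∃ C : ℝ, 0 < C ∧
      ∀ (a b : ℝ) (n : ℕ), 0 < a → a < b → 1 ≤ n →
        bestApproxErr n Real.log a b ≤ C * Wfun (b / (a * (n : ℝ) ^ 2)) := by
  refine ⟨7, by norm_num, fun a b n ha hab hn => ?_⟩
  obtain ⟨P, hPdeg, hP⟩ := exists_poly a b n ha hab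
  have htail := tail_le_W a b n ha hab hn
  have htail_nonneg : (0 : ℝ) ≤ ∑' k : ℕ, hfun (rr a b) (k + (n + 1)) := by
    refine tsum_nonneg fun k => ?_
    have hρ : (1 : ℝ) < rr a b := one_lt_rr ha hab
    unfold hfun
    positivity
  have hW : (0 : ℝ) ≤ 7 * Wfun (b / (a * (n : ℝ) ^ 2)) := le_trans htail_nonneg htail
  have hstep : (⨆ x ∈ Set.Icc a b, |Real.log x - P.eval x|)
      ≤ 7 * Wfun (b / (a * (n : ℝ) ^ 2)) := by
    refine Real.iSup_le (fun x => Real.iSup_le (fun hx => le_trans (hP x hx) htail) hW) hW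
  refine le_trans (ciInf_le ?_ (⟨P, hPdeg⟩ : {p : Polynomial ℝ // p.degree ≤ n})) hstep
  refine ⟨0, ?_⟩
  rintro y ⟨p, rfl⟩
  exact Real.iSup_nonneg fun x => Real.iSup_nonneg fun _ => abs_nonneg _

end
end

section
/- Let n ≥ 0 be an integer, let a < b be reals with a + b ≠ 0, let A > 0, and let p(x) = Σ_{ν=0}^{n} a_ν·x^ν be a real polynomial of degree at most n with |p(x)| ≤ A for all x ∈ [a,b]. Then for every ν ∈ {0, 1, …, n}, |a_ν| ≤ 2^{7n/2}·A·|(a+b)/2|^{−ν}·(|(b+a)/(b−a)|^n + 1). -/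
open scoped BigOperators

open Polynomial Finset

lemma coeff_prod_X_sub_C_mul_pow_le (M : ℝ) (hM : 0 ≤ M) (w : ℕ → ℝ) (t : Finset ℕ) :
    ∀ ν : ℕ, (∀ i ∈ t, |w i| ≤ M) →
    |(∏ i ∈ t, (X - C (w i))).coeff ν| * M ^ ν ≤ (t.card.choose ν) * M ^ t.card := by
  induction t using Finset.induction_on with
  | empty =>
    intro ν _
    rcases ν with _ | k
    · simp
    · simp [Polynomial.coeff_one]
  | @insert a t ha ih =>
    intro ν hw
    have hwt : ∀ i ∈ t, |w i| ≤ M := fun i hi => hw i (mem_insert_of_mem hi)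
    have hwa : |w a| ≤ M := hw a (mem_insert_self a t)
    rw [prod_insert ha, card_insert_of_notMem ha]
    set Q := ∏ i ∈ t, (X - C (w i)) with hQ
    have hco : ∀ k, ((X - C (w a)) * Q).coeff k
        = (X * Q).coeff k - w a * Q.coeff k := by
      intro k; rw [sub_mul, coeff_sub, coeff_C_mul]
    rcases ν with _ | k
    · rw [hco 0]
      simp only [mul_comm X Q, Polynomial.coeff_mul_X_zero, zero_sub, abs_neg, abs_mul,
        pow_zero, mul_one, Nat.choose_zero_right, Nat.cast_one, one_mul]
      calc |w a| * |Q.coeff 0| ≤ M * (t.card.choose 0 * M ^ t.card) := by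
            have := ih 0 hwt
            simp only [pow_zero, mul_one] at this
            exact mul_le_mul hwa this (abs_nonneg _) hM
        _ = M ^ (t.card + 1) := by simp [pow_succ]; ring
    · rw [hco (k+1), Polynomial.coeff_X_mul]
      have habs : |Q.coeff k - w a * Q.coeff (k+1)| ≤ |Q.coeff k| + |w a| * |Q.coeff (k+1)| := by
        calc |Q.coeff k - w a * Q.coeff (k+1)| ≤ |Q.coeff k| + |w a * Q.coeff (k+1)| :=
              abs_sub _ _
          _ = |Q.coeff k| + |w a| * |Q.coeff (k+1)| := by rw [abs_mul]
      calc |Q.coeff k - w a * Q.coeff (k+1)| * M ^ (k+1)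
          ≤ (|Q.coeff k| + |w a| * |Q.coeff (k+1)|) * M ^ (k+1) :=
            mul_le_mul_of_nonneg_right habs (by positivity)
        _ = (|Q.coeff k| * M ^ k) * M + |w a| * (|Q.coeff (k+1)| * M ^ (k+1)) := by ring
        _ ≤ (t.card.choose k * M ^ t.card) * M + M * (t.card.choose (k+1) * M ^ t.card) := by
            have h1 := ih k hwt
            have h2 := ih (k+1) hwt
            gcongr
        _ = ((t.card.choose k + t.card.choose (k+1) : ℕ) : ℝ) * M ^ (t.card + 1) := by
            push_cast; ring
        _ = ((t.card + 1).choose (k+1) : ℝ) * M ^ (t.card + 1) := by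
            rw [Nat.choose_succ_succ']

open Polynomial Finset

-- B': ∏_{i ∈ (range (n+1)).erase j} |(j:ℝ) - i| = j! * (n-j)!
lemma prod_abs_sub_nodes (n j : ℕ) (hj : j ≤ n) :
    ∏ i ∈ (Finset.range (n+1)).erase j, |(j : ℝ) - (i : ℝ)|
      = (j.factorial : ℝ) * ((n - j).factorial : ℝ) := by
  have hsplit : (Finset.range (n+1)).erase j = Finset.range j ∪ Finset.Ico (j+1) (n+1) := by
    ext i
    simp only [mem_erase, mem_range, mem_union, Finset.mem_Ico]
    omega
  have hdisj : Disjoint (Finset.range j) (Finset.Ico (j+1) (n+1)) := by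
    rw [Finset.disjoint_left]
    intro i hi hi'
    simp only [mem_range, Finset.mem_Ico] at hi hi'
    omega
  rw [hsplit, Finset.prod_union hdisj]
  have h1 : ∏ i ∈ Finset.range j, |(j : ℝ) - (i : ℝ)| = (j.factorial : ℝ) := by
    have : ∀ i ∈ Finset.range j, |(j : ℝ) - (i : ℝ)| = ((j - i : ℕ) : ℝ) := by
      intro i hi
      rw [mem_range] at hi
      rw [Nat.cast_sub hi.le, abs_of_pos]
      have : (i : ℝ) < j := by exact_mod_cast hi
      linarith
    rw [Finset.prod_congr rfl this, ← Nat.cast_prod]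
    norm_cast
    rw [← Finset.prod_range_reflect (fun i => j - i) j]
    have : ∀ i ∈ Finset.range j, j - (j - 1 - i) = i + 1 := by
      intro i hi; rw [mem_range] at hi; omega
    rw [Finset.prod_congr rfl this]
    exact Finset.prod_range_add_one_eq_factorial j
  have h2 : ∏ i ∈ Finset.Ico (j+1) (n+1), |(j : ℝ) - (i : ℝ)| = ((n - j).factorial : ℝ) := by
    have : ∀ i ∈ Finset.Ico (j+1) (n+1), |(j : ℝ) - (i : ℝ)| = ((i - j : ℕ) : ℝ) := by
      intro i hi
      rw [Finset.mem_Ico] at hi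
      rw [Nat.cast_sub (by omega), abs_sub_comm, abs_of_pos]
      have : (j : ℝ) < i := by exact_mod_cast hi.1
      linarith
    rw [Finset.prod_congr rfl this, ← Nat.cast_prod]
    norm_cast
    rw [Finset.prod_Ico_eq_prod_range]
    have : ∀ k ∈ Finset.range (n + 1 - (j+1)), j + 1 + k - j = k + 1 := fun k _ => by omega
    rw [Finset.prod_congr rfl this]
    have hn : n + 1 - (j + 1) = n - j := by omega
    rw [hn]
    exact Finset.prod_range_add_one_eq_factorial (n - j)
  rw [h1, h2]

-- C: n^n ≤ e^n * n!
lemma pow_self_le_exp_mul_factorial (n : ℕ) :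
    (n : ℝ) ^ n ≤ Real.exp 1 ^ n * (n.factorial : ℝ) := by
  induction n with
  | zero => simp
  | succ n ih =>
    have he : ((n:ℝ) + 1) ^ n ≤ Real.exp 1 * (n : ℝ) ^ n := by
      rcases Nat.eq_zero_or_pos n with h | h
      · subst h; simp [Real.one_le_exp_iff]
      · have hn : (0:ℝ) < n := by exact_mod_cast h
        have h1 : ((n:ℝ) + 1) ^ n = ((1 + 1 / n) * n) ^ n := by
          congr 1; field_simp
        rw [h1, mul_pow]
        have h2 : (1 + 1 / (n:ℝ)) ^ n ≤ Real.exp 1 := by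
          have : (1 + 1 / (n:ℝ)) ≤ Real.exp (1 / n) := by
            have := Real.add_one_le_exp (1 / (n:ℝ))
            linarith
          calc (1 + 1 / (n:ℝ)) ^ n ≤ Real.exp (1 / n) ^ n := by
                apply pow_le_pow_left₀ (by positivity) this
            _ = Real.exp ((1 / n) * n) := by rw [← Real.exp_nat_mul]; ring_nf
            _ = Real.exp 1 := by rw [one_div, inv_mul_cancel₀ (ne_of_gt hn)]
        exact mul_le_mul_of_nonneg_right h2 (by positivity)
    push_cast
    calc ((n:ℝ) + 1) ^ (n + 1) = ((n:ℝ) + 1) ^ n * (n + 1) := by ring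
      _ ≤ Real.exp 1 * (n:ℝ) ^ n * (n + 1) := by
          apply mul_le_mul_of_nonneg_right he (by positivity)
      _ ≤ Real.exp 1 * (Real.exp 1 ^ n * n.factorial) * (n + 1) := by
          have := mul_le_mul_of_nonneg_left ih (Real.exp_pos 1).le
          apply mul_le_mul_of_nonneg_right this (by positivity)
      _ = Real.exp 1 ^ (n+1) * ((n+1).factorial : ℝ) := by
          rw [Nat.factorial_succ]; push_cast; ring

-- D: e ≤ 2√2
lemma exp_one_le : Real.exp 1 ≤ 2 * Real.sqrt 2 := by
  have h1 : Real.exp 1 < 2.7182818286 := Real.exp_one_lt_d9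
  have h2 : (2.7182818286 : ℝ) ≤ 2 * Real.sqrt 2 := by
    have hs : (1.414213562 : ℝ) ≤ Real.sqrt 2 := by
      rw [show (2:ℝ) = 1.4142135623730951 ^ 2 + (2 - 1.4142135623730951^2) by ring]
      nlinarith [Real.sq_sqrt (by norm_num : (0:ℝ) ≤ 2), Real.sqrt_nonneg 2,
        Real.sqrt_le_sqrt (by norm_num : (2:ℝ) ≤ 2)]
    linarith
  linarith


/-- Coefficient bound for polynomials bounded on an interval `[a,b]` not centered at the
origin: if `deg p ≤ n` and `|p(x)| ≤ A` on `[a,b]` with `a + b ≠ 0`, then for every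
`ν ≤ n`, `|a_ν| ≤ 2^{7n/2} A |(a+b)/2|^{−ν} (|(b+a)/(b−a)|ⁿ + 1)`. -/
theorem poly_coeff_bound (n : ℕ) (a b A : ℝ) (hab : a < b) (hne : a + b ≠ 0) (hA : 0 < A)
    (p : Polynomial ℝ) (hdeg : p.degree ≤ n)
    (hbd : ∀ x ∈ Set.Icc a b, |p.eval x| ≤ A) :
    ∀ ν : ℕ, ν ≤ n →
      |p.coeff ν| ≤ (2 : ℝ) ^ ((7 * (n : ℝ)) / 2) * A * |(a + b) / 2| ^ (-(ν : ℤ)) *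
        (|(b + a) / (b - a)| ^ n + 1) := by
  intro ν hν
  have hba : (0:ℝ) < b - a := sub_pos.mpr hab
  set K := |(a + b) / 2| with hK
  set u := |(b + a) / (b - a)| with hu0
  clear_value K u
  have hKpos : 0 < K := hK ▸ abs_pos.mpr (div_ne_zero hne two_ne_zero)
  have hKν : (0:ℝ) < K ^ ν := pow_pos hKpos ν
  have hunn : 0 ≤ u := hu0 ▸ abs_nonneg _
  have hrw : (2 : ℝ) ^ ((7 * (n : ℝ)) / 2) * A * K ^ (-(ν : ℤ)) * (u ^ n + 1)
      = (2 : ℝ) ^ ((7 * (n : ℝ)) / 2) * A * (u ^ n + 1) / K ^ ν := by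
    rw [zpow_neg, zpow_natCast]; ring
  rw [hrw, le_div_iff₀ hKν]
  -- trivial case n = 0
  rcases Nat.eq_zero_or_pos n with hn0 | hn
  · subst hn0
    obtain rfl : ν = 0 := Nat.le_zero.mp hν
    have hpc : p.eval a = p.coeff 0 := by
      rw [Polynomial.eq_C_of_degree_le_zero (show p.degree ≤ 0 by simpa using hdeg)]
      simp
    have h0 : |p.coeff 0| ≤ A := hpc ▸ hbd a ⟨le_refl a, hab.le⟩
    have h2 : (2:ℝ) ^ ((7 * ((0:ℕ) : ℝ)) / 2) = 1 := by
      norm_num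
    rw [h2]
    simp only [pow_zero, mul_one, one_mul]
    linarith
  -- main case: n ≥ 1
  have hnR : (0:ℝ) < n := by exact_mod_cast hn
  set h : ℝ := (b - a) / n with hh0
  have hh : 0 < h := div_pos hba hnR
  set v : ℕ → ℝ := fun i => a + i * h with hv
  set M : ℝ := K + (b - a) / 2 with hM0
  clear_value h v M
  have hr2 : (0:ℝ) < (b - a) / 2 := by linarith
  have hKM : K ≤ M := by rw [hM0]; linarith
  have hMpos : 0 < M := lt_of_lt_of_le hKpos hKM
  have hvmem : ∀ i ∈ Finset.range (n+1), v i ∈ Set.Icc a b := by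
    intro i hi
    rw [Finset.mem_range] at hi
    have hin : (i:ℝ) ≤ n := by exact_mod_cast Nat.lt_succ_iff.mp hi
    have h1 : (0:ℝ) ≤ (i:ℝ) * h := mul_nonneg (Nat.cast_nonneg i) hh.le
    have h2 : (i:ℝ) * h ≤ (n:ℝ) * h := mul_le_mul_of_nonneg_right hin hh.le
    have h3 : (n:ℝ) * h = b - a := by rw [hh0]; field_simp
    constructor
    · simp only [hv]; linarith
    · simp only [hv]; linarith
  have hvM : ∀ i ∈ Finset.range (n+1), |v i| ≤ M := by
    intro i hi
    obtain ⟨hia, hib⟩ := hvmem i hi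
    have h1 : -K ≤ (a+b)/2 := by rw [hK]; exact neg_abs_le _
    have h2 : (a+b)/2 ≤ K := by rw [hK]; exact le_abs_self _
    rw [abs_le, hM0]
    constructor <;> linarith
  have hinj : Set.InjOn v ↑(Finset.range (n+1)) := by
    intro i _ j _ hij
    simp only [hv] at hij
    have : (i:ℝ) * h = (j:ℝ) * h := by linarith
    have : (i:ℝ) = j := mul_right_cancel₀ (ne_of_gt hh) this
    exact_mod_cast this
  have hdlt : p.degree < (Finset.range (n+1)).card := by
    rw [Finset.card_range]
    exact lt_of_le_of_lt hdeg (by exact_mod_cast Nat.lt_succ_self n)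
  have hcoeff : p.coeff ν = ∑ j ∈ Finset.range (n+1),
      p.eval (v j) * (Lagrange.basis (Finset.range (n+1)) v j).coeff ν := by
    conv_lhs => rw [Lagrange.eq_interpolate hinj hdlt]
    rw [Lagrange.interpolate_apply, Polynomial.finset_sum_coeff]
    exact Finset.sum_congr rfl fun j _ => Polynomial.coeff_C_mul _
  -- per-term bound
  have hterm : ∀ j ∈ Finset.range (n+1),
      |p.eval (v j) * (Lagrange.basis (Finset.range (n+1)) v j).coeff ν| * K ^ ν
        ≤ A * ((n.choose ν : ℝ) * M ^ n) * (h ^ n * (j.factorial : ℝ) * ((n - j).factorial : ℝ))⁻¹ := by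
    intro j hj
    have hjn : j ≤ n := Nat.lt_succ_iff.mp (Finset.mem_range.mp hj)
    set t := (Finset.range (n+1)).erase j with ht
    have hcard : t.card = n := by rw [ht, Finset.card_erase_of_mem hj, Finset.card_range]; omega
    have hQ := coeff_prod_X_sub_C_mul_pow_le M hMpos.le v t ν
      (fun i hi => hvM i (Finset.mem_of_mem_erase hi))
    rw [hcard] at hQ
    have hbasis : (Lagrange.basis (Finset.range (n+1)) v j).coeff ν
        = (∏ i ∈ t, (v j - v i)⁻¹) * (∏ i ∈ t, (Polynomial.X - Polynomial.C (v i))).coeff ν := by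
      rw [Lagrange.basis]
      simp_rw [Lagrange.basisDivisor]
      rw [Finset.prod_mul_distrib, ← map_prod, Polynomial.coeff_C_mul]
    have hDval : ∏ i ∈ t, |v j - v i| = h ^ n * (j.factorial : ℝ) * ((n - j).factorial : ℝ) := by
      have hstep : ∀ i ∈ t, |v j - v i| = |(j:ℝ) - (i:ℝ)| * h := by
        intro i _
        have : v j - v i = ((j:ℝ) - (i:ℝ)) * h := by simp only [hv]; ring
        rw [this, abs_mul, abs_of_pos hh]
      rw [Finset.prod_congr rfl hstep, Finset.prod_mul_distrib, Finset.prod_const, hcard,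
        prod_abs_sub_nodes n j hjn]
      ring
    have habsD : |∏ i ∈ t, (v j - v i)⁻¹| = (∏ i ∈ t, |v j - v i|)⁻¹ := by
      rw [Finset.abs_prod, ← Finset.prod_inv_distrib]
      exact Finset.prod_congr rfl fun i _ => abs_inv _
    have hDpos : 0 < ∏ i ∈ t, |v j - v i| := by
      rw [hDval]
      positivity
    have heval : |p.eval (v j)| ≤ A := hbd (v j) (hvmem j hj)
    have hQK : |(∏ i ∈ t, (Polynomial.X - Polynomial.C (v i))).coeff ν| * K ^ ν
        ≤ (n.choose ν : ℝ) * M ^ n := by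
      refine le_trans ?_ hQ
      exact mul_le_mul_of_nonneg_left (pow_le_pow_left₀ hKpos.le hKM ν) (abs_nonneg _)
    rw [hbasis]
    calc |p.eval (v j) * ((∏ i ∈ t, (v j - v i)⁻¹) *
            (∏ i ∈ t, (Polynomial.X - Polynomial.C (v i))).coeff ν)| * K ^ ν
          = |p.eval (v j)| * (|(∏ i ∈ t, (Polynomial.X - Polynomial.C (v i))).coeff ν| * K ^ ν)
            * (∏ i ∈ t, |v j - v i|)⁻¹ := by
            rw [abs_mul, abs_mul, habsD]; ring
      _ ≤ A * ((n.choose ν : ℝ) * M ^ n) * (∏ i ∈ t, |v j - v i|)⁻¹ := by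
            have hinv : (0:ℝ) ≤ (∏ i ∈ t, |v j - v i|)⁻¹ := inv_nonneg.mpr hDpos.le
            apply mul_le_mul_of_nonneg_right _ hinv
            exact mul_le_mul heval hQK (by positivity) hA.le
      _ = A * ((n.choose ν : ℝ) * M ^ n)
            * (h ^ n * (j.factorial : ℝ) * ((n - j).factorial : ℝ))⁻¹ := by rw [hDval]
    -- end per-term bound
  have hnfac : (0:ℝ) < (n.factorial : ℝ) := by exact_mod_cast Nat.factorial_pos n
  have hsum1 : |p.coeff ν| * K ^ ν ≤ ∑ j ∈ Finset.range (n+1),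
      A * ((n.choose ν : ℝ) * M ^ n) * (h ^ n * (j.factorial : ℝ) * ((n - j).factorial : ℝ))⁻¹ := by
    calc |p.coeff ν| * K ^ ν
        ≤ (∑ j ∈ Finset.range (n+1),
            |p.eval (v j) * (Lagrange.basis (Finset.range (n+1)) v j).coeff ν|) * K ^ ν := by
          apply mul_le_mul_of_nonneg_right _ hKν.le
          rw [hcoeff]
          exact Finset.abs_sum_le_sum_abs _ _
      _ = ∑ j ∈ Finset.range (n+1),
            |p.eval (v j) * (Lagrange.basis (Finset.range (n+1)) v j).coeff ν| * K ^ ν := by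
          rw [Finset.sum_mul]
      _ ≤ _ := Finset.sum_le_sum hterm
  have hjfac : ∀ j ∈ Finset.range (n+1),
      (h ^ n * (j.factorial : ℝ) * ((n - j).factorial : ℝ))⁻¹
        = (h ^ n)⁻¹ * ((n.choose j : ℝ) / (n.factorial : ℝ)) := by
    intro j hj
    have hjn : j ≤ n := Nat.lt_succ_iff.mp (Finset.mem_range.mp hj)
    have key : (n.choose j : ℝ) * ((j.factorial : ℝ) * ((n - j).factorial : ℝ))
        = (n.factorial : ℝ) := by
      have := Nat.choose_mul_factorial_mul_factorial hjn
      push_cast [← this]; ring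
    have hf1 : ((j.factorial : ℕ) : ℝ) ≠ 0 := by exact_mod_cast (Nat.factorial_pos j).ne'
    have hf2 : (((n - j).factorial : ℕ) : ℝ) ≠ 0 := by
      exact_mod_cast (Nat.factorial_pos (n - j)).ne'
    have hc0 : (n.choose j : ℝ) ≠ 0 := by exact_mod_cast (Nat.choose_pos hjn).ne'
    rw [mul_assoc, mul_inv, ← key, div_mul_cancel_left₀ hc0]
  have hsum2 : (∑ j ∈ Finset.range (n+1),
      A * ((n.choose ν : ℝ) * M ^ n) * (h ^ n * (j.factorial : ℝ) * ((n - j).factorial : ℝ))⁻¹)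
      = A * ((n.choose ν : ℝ) * M ^ n) * (h ^ n)⁻¹ * ((2:ℝ) ^ n / (n.factorial : ℝ)) := by
    rw [Finset.sum_congr rfl (fun j hj => by rw [hjfac j hj])]
    have : ∀ j ∈ Finset.range (n+1),
        A * ((n.choose ν : ℝ) * M ^ n) * ((h ^ n)⁻¹ * ((n.choose j : ℝ) / (n.factorial : ℝ)))
        = (A * ((n.choose ν : ℝ) * M ^ n) * (h ^ n)⁻¹ / (n.factorial : ℝ)) * (n.choose j : ℝ) := by
      intro j _; ring
    rw [Finset.sum_congr rfl this, ← Finset.mul_sum, ← Nat.cast_sum, Nat.sum_range_choose]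
    push_cast
    ring
  rw [hsum2] at hsum1
  -- now the constant estimates
  have hch : (n.choose ν : ℝ) ≤ 2 ^ n := by
    have : n.choose ν ≤ 2 ^ n := by
      calc n.choose ν ≤ ∑ j ∈ Finset.range (n+1), n.choose j :=
            Finset.single_le_sum (fun i _ => Nat.zero_le _) (Finset.mem_range.mpr (by omega))
        _ = 2 ^ n := Nat.sum_range_choose n
    exact_mod_cast this
  have hhinv : (h ^ n)⁻¹ = (n:ℝ) ^ n / (b - a) ^ n := by
    rw [hh0, div_pow, inv_div]
  have hnn : (n:ℝ) ^ n / (n.factorial : ℝ) ≤ Real.exp 1 ^ n :=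
    (div_le_iff₀ hnfac).mpr (pow_self_le_exp_mul_factorial n)
  have hu1 : u = K / ((b - a) / 2) := by
    have hx : (b + a) / (b - a) = ((a + b) / 2) / ((b - a) / 2) := by
      field_simp
      ring
    rw [hu0, hx, abs_div, abs_of_pos hr2, hK]
  have hKu : K = u * ((b - a) / 2) := by
    rw [hu1]; field_simp
  have hMu : M = (u + 1) * ((b - a) / 2) := by
    rw [hM0, hKu]; ring
  have hLHS : A * ((n.choose ν : ℝ) * M ^ n) * (h ^ n)⁻¹ * ((2:ℝ) ^ n / (n.factorial : ℝ))
      = A * (n.choose ν : ℝ) * (2:ℝ) ^ n * ((n:ℝ) ^ n / (n.factorial : ℝ)) * ((u + 1) / 2) ^ n := by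
    rw [hhinv]
    have hq : ((u + 1) / 2 : ℝ) = M / (b - a) := by
      rw [hMu]; field_simp
    rw [hq, div_pow M]
    ring
  rw [hLHS] at hsum1
  -- bound ((u+1)/2)^n ≤ (max u 1)^n and (max u 1)^n ≤ u^n + 1
  have hmax1 : (0:ℝ) ≤ max u 1 := le_trans zero_le_one (le_max_right u 1)
  have hm2 : ((u + 1) / 2 : ℝ) ≤ max u 1 := by
    rcases le_total u 1 with hcase | hcase
    · rw [max_eq_right hcase]; linarith
    · rw [max_eq_left hcase]; linarith
  have hm3 : (max u 1) ^ n ≤ u ^ n + 1 := by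
    rcases le_total u 1 with hcase | hcase
    · rw [max_eq_right hcase, one_pow]
      have : (0:ℝ) ≤ u ^ n := pow_nonneg hunn n
      linarith
    · rw [max_eq_left hcase]
      have : (0:ℝ) ≤ u ^ n := pow_nonneg hunn n
      linarith
  have hexp : Real.exp 1 ^ n ≤ (2 * Real.sqrt 2) ^ n :=
    pow_le_pow_left₀ (Real.exp_pos 1).le exp_one_le n
  have h2pow : (2:ℝ) ^ ((7 * (n:ℝ)) / 2) = (8 * Real.sqrt 2) ^ n := by
    rw [show (7 * (n:ℝ)) / 2 = (7/2) * (n:ℝ) by ring,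
      Real.rpow_mul (by norm_num : (0:ℝ) ≤ 2), Real.rpow_natCast]
    congr 1
    rw [show (7/2 : ℝ) = (3:ℕ) + 1/2 by norm_num, Real.rpow_add (by norm_num : (0:ℝ) < 2),
      Real.rpow_natCast, ← Real.sqrt_eq_rpow]
    norm_num
  have hfin : A * (n.choose ν : ℝ) * (2:ℝ) ^ n * ((n:ℝ) ^ n / (n.factorial : ℝ))
      * ((u + 1) / 2) ^ n ≤ (2:ℝ) ^ ((7 * (n:ℝ)) / 2) * A * (u ^ n + 1) := by
    rw [h2pow]
    have hd : (0:ℝ) ≤ (n:ℝ) ^ n / (n.factorial : ℝ) := by positivity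
    have hud : (0:ℝ) ≤ (u + 1) / 2 := by linarith
    calc A * (n.choose ν : ℝ) * (2:ℝ) ^ n * ((n:ℝ) ^ n / (n.factorial : ℝ)) * ((u + 1) / 2) ^ n
        ≤ A * (2:ℝ) ^ n * (2:ℝ) ^ n * Real.exp 1 ^ n * (max u 1) ^ n := by
          gcongr ?_ * ?_ * ?_ * ?_ * ?_ <;>
            first
              | rfl
              | exact le_refl A
              | exact hch
              | exact le_refl ((2:ℝ)^n)
              | exact hnn
              | exact pow_le_pow_left₀ hud hm2 n
      _ ≤ A * (2:ℝ) ^ n * (2:ℝ) ^ n * (2 * Real.sqrt 2) ^ n * (max u 1) ^ n := by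
          gcongr
      _ = A * (8 * Real.sqrt 2) ^ n * (max u 1) ^ n := by
          have hcomb : (2:ℝ) ^ n * 2 ^ n * (2 * Real.sqrt 2) ^ n = (8 * Real.sqrt 2) ^ n := by
            rw [← mul_pow, ← mul_pow]
            congr 1
            ring
          rw [show A * (2:ℝ) ^ n * 2 ^ n * (2 * Real.sqrt 2) ^ n * (max u 1) ^ n
              = A * ((2:ℝ) ^ n * 2 ^ n * (2 * Real.sqrt 2) ^ n) * (max u 1) ^ n by ring, hcomb]
      _ ≤ A * (8 * Real.sqrt 2) ^ n * (u ^ n + 1) := by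
          have h8 : (0:ℝ) ≤ (8 * Real.sqrt 2) ^ n := by positivity
          gcongr
      _ = (8 * Real.sqrt 2) ^ n * A * (u ^ n + 1) := by ring
  linarith [hsum1, hfin]
end
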